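/- arXiv:2406.05960 — 6 statements merged into one kernel-verified Lean document; each statement's English description precedes it below -/
import Mathlib

section
/- Let z_1,…,z_n be monomials in the polynomial ring K[x_1,…,x_m] over a field K such that for i ≠ j, z_i does not divide z_j, gcd(z_i, z_{i2}) divides z_{i1} whenever 1 ≤ i < i1 ≤ i2 ≤ n, and gcd(z_i, z_j) = gcd(z_i, z_j^2) for all 1 ≤ i < j ≤ n. Then for all i < i1 ≤ i2, gcd(z_i, z_{i1} z_{i2}) = gcd(z_i, z_{i1}). -/
open MvPolynomial

lemma prod_pow_eq_monomial' {K : Type*} [Field K] {m : ℕ} (b : Fin m → ℕ) :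
    (∏ t, (X t : MvPolynomial (Fin m) K) ^ b t) =
      monomial (Finsupp.equivFunOnFinite.symm b) 1 := by
  rw [← prod_X_pow_eq_monomial]
  exact (Finset.prod_subset (Finset.subset_univ _) (fun x _ hx => by
    rw [show b x = 0 from Finsupp.notMem_support_iff.mp hx, pow_zero])).symm

lemma dvd_pointwise {K : Type*} [Field K] {m : ℕ} {b c : Fin m → ℕ}
    (h : (∏ t, (X t : MvPolynomial (Fin m) K) ^ b t) ∣ ∏ t, (X t) ^ c t) :
    ∀ t, b t ≤ c t := by
  rw [prod_pow_eq_monomial', prod_pow_eq_monomial', monomial_dvd_monomial] at h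
  rcases h with h | h
  · exact absurd h one_ne_zero
  · exact fun t => h t

/-- For monomials `z i = x^(a i)` in `K[x_1,…,x_m]` (gcd of monomials
being given by the componentwise minimum of exponent vectors), if `z i ∤ z j` for
`i ≠ j`, `gcd(z_i, z_{i2}) ∣ z_{i1}` whenever `i < i1 ≤ i2`, and
`gcd(z_i, z_j) = gcd(z_i, z_j^2)` for `i < j`, then
`gcd(z_i, z_{i1} z_{i2}) = gcd(z_i, z_{i1})` for all `i < i1 ≤ i2`. -/
theorem monomial_gcd_of_pSeq_conditions {K : Type*} [Field K] {m n : ℕ}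
    (a : Fin n → Fin m → ℕ)
    (hnd : ∀ i j : Fin n, i ≠ j →
      ¬ ((∏ t, (X t : MvPolynomial (Fin m) K) ^ a i t) ∣ ∏ t, (X t) ^ a j t))
    (hcond1 : ∀ i i1 i2 : Fin n, i < i1 → i1 ≤ i2 →
      (∏ t, (X t : MvPolynomial (Fin m) K) ^ min (a i t) (a i2 t)) ∣ ∏ t, (X t) ^ a i1 t)
    (hcond2 : ∀ i j : Fin n, i < j →
      (fun t => min (a i t) (a j t)) = (fun t => min (a i t) (2 * a j t))) :
    ∀ i i1 i2 : Fin n, i < i1 → i1 ≤ i2 →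
      (fun t => min (a i t) (a i1 t + a i2 t)) = (fun t => min (a i t) (a i1 t)) := by
  intro i i1 i2 h1 h2
  funext t
  rcases le_or_gt (a i t) (a i1 t) with hle | hlt
  · rw [min_eq_left hle, min_eq_left (hle.trans (Nat.le_add_right _ _))]
  · -- a i1 t < a i t, so by hcond2, a i1 t = 0
    have h2' := congrFun (hcond2 i i1 h1) t
    beta_reduce at h2'
    have hz : a i1 t = 0 := by omega
    have hd := dvd_pointwise (K := K) (hcond1 i i1 i2 h1 h2) t
    omega
end

section
/- Let z_1,…,z_n be monomials in K[x_1,…,x_m] over a field K such that for i ≠ j, z_i ∤ z_j, gcd(z_i, z_{i2}) | z_{i1} for all 1 ≤ i < i1 ≤ i2 ≤ n, and gcd(z_i, z_j) = gcd(z_i, z_j^2) for all 1 ≤ i < j ≤ n. Then z_1,…,z_n form a p-sequence: (z_1,…,z_i) : (z_{i1} z_{i2}) = (z_1,…,z_i) : z_{i1} for all 0 ≤ i ≤ n−1 and i < i1 ≤ i2 ≤ n, and z_1,…,z_n minimally generate (z_1,…,z_n). -/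
open MvPolynomial

lemma prod_X_pow_fun_eq_monomial {K : Type*} [Field K] {m : ℕ} (b : Fin m → ℕ) :
    ∏ t, (X t : MvPolynomial (Fin m) K) ^ b t =
      monomial (Finsupp.equivFunOnFinite.symm b) 1 := by
  rw [← prod_X_pow_eq_monomial]
  refine (Finset.prod_subset (Finset.subset_univ _) fun t _ ht => ?_).symm
  rw [Finsupp.notMem_support_iff] at ht
  rw [show b t = 0 from ht, pow_zero]

/-- Monomials `z i = x^(a i)` in `K[x_1,…,x_m]` satisfying the
non-divisibility and gcd conditions of Proposition 2.7 form a `p`-sequence: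
the colon condition `(z_1,…,z_i) : (z_{i1} z_{i2}) = (z_1,…,z_i) : z_{i1}` holds for all
`0 ≤ i ≤ n-1` and `i < i1 ≤ i2 ≤ n` (0-based below), and they minimally generate their
ideal. -/
theorem monomial_pSequence {K : Type*} [Field K] {m n : ℕ}
    (a : Fin n → Fin m → ℕ)
    (z : Fin n → MvPolynomial (Fin m) K)
    (hz : ∀ i, z i = ∏ t, (X t : MvPolynomial (Fin m) K) ^ a i t)
    (hnd : ∀ i j : Fin n, i ≠ j → ¬ (z i ∣ z j))
    (hcond1 : ∀ i i1 i2 : Fin n, i < i1 → i1 ≤ i2 →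
      (∏ t, (X t : MvPolynomial (Fin m) K) ^ min (a i t) (a i2 t)) ∣ z i1)
    (hcond2 : ∀ i j : Fin n, i < j →
      (fun t => min (a i t) (a j t)) = (fun t => min (a i t) (2 * a j t))) :
    (∀ i : ℕ, i < n → ∀ i1 i2 : Fin n, i ≤ i1.val → i1 ≤ i2 →
      (Ideal.span (z '' {j | j.val < i})).colon (Ideal.span {z i1 * z i2}) =
      (Ideal.span (z '' {j | j.val < i})).colon (Ideal.span {z i1})) ∧
    (∀ k : Fin n, z k ∉ Ideal.span (z '' {j | j ≠ k})) := by
  classical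
  set D : Fin n → (Fin m →₀ ℕ) := fun i => Finsupp.equivFunOnFinite.symm (a i) with hD
  have hDa : ∀ i t, D i t = a i t := fun i t => rfl
  have hzm : ∀ i, z i = monomial (D i) 1 := fun i => by
    rw [hz i, prod_X_pow_fun_eq_monomial]
  -- the key coordinatewise inequality from hcond1
  have key1 : ∀ (j i1 i2 : Fin n), j < i1 → i1 ≤ i2 → ∀ t,
      min (a j t) (a i2 t) ≤ a i1 t := by
    intro j i1 i2 hj hi t
    have h := hcond1 j i1 i2 hj hi
    rw [prod_X_pow_fun_eq_monomial, hzm, monomial_dvd_monomial] at h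
    rcases h.1 with h | h
    · exact absurd h one_ne_zero
    · exact h t
  -- the key dichotomy from hcond2
  have key2 : ∀ (j i2 : Fin n), j < i2 → ∀ t, a i2 t = 0 ∨ a j t ≤ a i2 t := by
    intro j i2 hj t
    have h := congrFun (hcond2 j i2 hj) t
    omega
  -- rewrite image sets as monomial images
  have himg : ∀ S : Set (Fin n), z '' S = (fun s => monomial s (1 : K)) '' (D '' S) := by
    intro S
    rw [Set.image_image]
    exact Set.image_congr fun j _ => hzm j
  constructor
  · intro i hi i1 i2 hi1 hi2
    apply le_antisymm
    · intro f hf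
      rw [Ideal.mem_colon_span_singleton] at hf ⊢
      rw [himg, mem_ideal_span_monomial_image] at hf ⊢
      intro xi hxi
      -- xi is in the support of f * z i1; shift by D i2
      rw [hzm i1, mem_support_iff, coeff_mul_monomial'] at hxi
      by_cases hle : D i1 ≤ xi
      swap
      · rw [if_neg hle] at hxi; exact absurd rfl hxi
      rw [if_pos hle, mul_one] at hxi
      have hxi2 : xi + D i2 ∈ (f * (z i1 * z i2)).support := by
        rw [hzm i1, hzm i2, monomial_mul, one_mul, mem_support_iff,
          coeff_mul_monomial']
        have hle2 : D i1 + D i2 ≤ xi + D i2 := add_le_add_left hle _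
        rw [if_pos hle2, mul_one]
        have : xi + D i2 - (D i1 + D i2) = xi - D i1 := by
          ext t
          simp only [Finsupp.coe_tsub, Finsupp.coe_add, Pi.sub_apply, Pi.add_apply]
          omega
        rwa [this]
      obtain ⟨si, hsi, hsile⟩ := hf _ hxi2
      refine ⟨si, hsi, ?_⟩
      obtain ⟨j, hjS, rfl⟩ := hsi
      intro t
      have h1 := hsile t
      simp only [Finsupp.coe_add, Pi.add_apply, hDa] at h1 ⊢
      have hji1 : j < i1 := lt_of_lt_of_le (by exact_mod_cast lt_of_lt_of_le hjS hi1) le_rfl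
      have hji2 : j < i2 := lt_of_lt_of_le hji1 hi2
      have h2 := key1 j i1 i2 hji1 hi2 t
      have h3 := key2 j i2 hji2 t
      have h4 : a i1 t ≤ xi t := by have := hle t; rwa [hDa] at this
      omega
    · intro f hf
      rw [Ideal.mem_colon_span_singleton] at hf ⊢
      rw [← mul_assoc]
      exact Ideal.mul_mem_right _ _ hf
  · intro k hk
    rw [himg, mem_ideal_span_monomial_image] at hk
    have hksup : D k ∈ (z k).support := by
      rw [hzm k, mem_support_iff, coeff_monomial, if_pos rfl]
      exact one_ne_zero
    obtain ⟨si, ⟨j, hjk, rfl⟩, hle⟩ := hk _ hksup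
    refine hnd j k hjk ?_
    rw [hzm j, hzm k, monomial_dvd_monomial]
    exact ⟨Or.inr hle, dvd_refl _⟩
end

section
/- The sequence of monomials x_1x_3x_4x_5, x_1^2x_2x_6, x_1^2x_2^2x_3x_5 in Q[x_1,…,x_6] is a d-sequence in the given order, but no permutation of it is a p-sequence. -/
open MvPolynomial

/-- A sequence `z 0, …, z (n-1)` is a `d`-sequence (Huneke): it minimally generates the
ideal it generates and `(z_1,…,z_i) : z_{i+1} z_j = (z_1,…,z_i) : z_j` for all
`0 ≤ i ≤ n-1` and `j ≥ i+1` (0-based below). -/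
def IsDSeq {A : Type*} [CommRing A] {n : ℕ} (z : Fin n → A) : Prop :=
  (∀ k : Fin n, z k ∉ Ideal.span (z '' {j | j ≠ k})) ∧
  (∀ i : Fin n, ∀ j : Fin n, i ≤ j →
    (Ideal.span (z '' {k | k < i})).colon (Ideal.span {z i * z j}) =
    (Ideal.span (z '' {k | k < i})).colon (Ideal.span {z j}))

/-- A sequence `z 0, …, z (n-1)` is a `p`-sequence: it minimally generates the ideal it
generates and `(z_1,…,z_i) : z_{i1} z_{i2} = (z_1,…,z_i) : z_{i1}` for all
`0 ≤ i ≤ n-1` and `i < i1 ≤ i2 ≤ n` (0-based below). -/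
def IsPSeq {A : Type*} [CommRing A] {n : ℕ} (z : Fin n → A) : Prop :=
  (∀ k : Fin n, z k ∉ Ideal.span (z '' {j | j ≠ k})) ∧
  (∀ i : ℕ, i < n → ∀ i1 i2 : Fin n, i ≤ i1.val → i1 ≤ i2 →
    (Ideal.span (z '' {j | j.val < i})).colon (Ideal.span {z i1 * z i2}) =
    (Ideal.span (z '' {j | j.val < i})).colon (Ideal.span {z i1}))

/-! ### Auxiliary material -/

namespace DPAux

abbrev A6 : Type := MvPolynomial (Fin 6) ℚ

noncomputable def m1 : A6 := X 0 * X 2 * X 3 * X 4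
noncomputable def m2 : A6 := X 0 ^ 2 * X 1 * X 5
noncomputable def m3 : A6 := X 0 ^ 2 * X 1 ^ 2 * X 2 * X 4

lemma m1_def : m1 = X 0 * X 2 * X 3 * X 4 := rfl
lemma m2_def : m2 = X 0 ^ 2 * X 1 * X 5 := rfl
lemma m3_def : m3 = X 0 ^ 2 * X 1 ^ 2 * X 2 * X 4 := rfl

lemma hm1 : m1 ≠ 0 := by
  simp only [m1_def]
  exact mul_ne_zero (mul_ne_zero (mul_ne_zero (X_ne_zero _) (X_ne_zero _)) (X_ne_zero _))
    (X_ne_zero _)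

lemma hm2 : m2 ≠ 0 := by
  simp only [m2]
  exact mul_ne_zero (mul_ne_zero (pow_ne_zero _ (X_ne_zero _)) (X_ne_zero _)) (X_ne_zero _)

lemma hm3 : m3 ≠ 0 := by
  simp only [m3]
  exact mul_ne_zero (mul_ne_zero (mul_ne_zero (pow_ne_zero _ (X_ne_zero _))
    (pow_ne_zero _ (X_ne_zero _))) (X_ne_zero _)) (X_ne_zero _)

/-- Kernel-style lemma: substituting according to `g` changes a polynomial by an
element of `I` whenever each variable is either fixed or sent to `0` with `X i ∈ I`. -/
lemma sub_aeval_mem (g : Fin 6 → A6) (I : Ideal A6)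
    (hg : ∀ i, g i = X i ∨ (g i = 0 ∧ X i ∈ I)) (p : A6) :
    p - aeval g p ∈ I := by
  induction p using MvPolynomial.induction_on with
  | C a => simp
  | add p q hp hq =>
      have h : p + q - aeval g (p + q) = (p - aeval g p) + (q - aeval g q) := by
        rw [map_add]; ring
      rw [h]; exact I.add_mem hp hq
  | mul_X p n hp =>
      rcases hg n with h | ⟨h0, hX⟩
      · have h' : p * X n - aeval g (p * X n) = (p - aeval g p) * X n := by
          rw [map_mul, aeval_X, h]; ring
        rw [h']; exact I.mul_mem_right _ hp
      · have h' : p * X n - aeval g (p * X n) = p * X n := by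
          rw [map_mul, aeval_X, h0]; ring
        rw [h']; exact I.mul_mem_left _ hX

lemma X_dvd_of_aeval (i : Fin 6) (p : A6)
    (h : aeval (fun j : Fin 6 => if j = i then (0 : A6) else X j) p = 0) : X i ∣ p := by
  have hg : ∀ j : Fin 6, (fun j : Fin 6 => if j = i then (0 : A6) else X j) j = X j ∨
      ((fun j : Fin 6 => if j = i then (0 : A6) else X j) j = 0 ∧
        X j ∈ Ideal.span {(X i : A6)}) := by
    intro j
    by_cases hj : j = i
    · subst hj; right; exact ⟨if_pos rfl, Ideal.subset_span rfl⟩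
    · left; exact if_neg hj
  have hs := sub_aeval_mem _ _ hg p
  rw [h, sub_zero] at hs
  exact Ideal.mem_span_singleton.mp hs

lemma mem_span35_of_aeval (p : A6)
    (h : aeval (fun j : Fin 6 => if j = 3 ∨ j = 5 then (0 : A6) else X j) p = 0) :
    p ∈ Ideal.span {(X 3 : A6), X 5} := by
  have hg : ∀ j : Fin 6, (fun j : Fin 6 => if j = 3 ∨ j = 5 then (0 : A6) else X j) j = X j ∨
      ((fun j : Fin 6 => if j = 3 ∨ j = 5 then (0 : A6) else X j) j = 0 ∧
        X j ∈ Ideal.span {(X 3 : A6), X 5}) := by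
    intro j
    by_cases hj : j = 3 ∨ j = 5
    · right
      refine ⟨if_pos hj, ?_⟩
      rcases hj with hj | hj <;> subst hj
      · exact Ideal.subset_span (by simp)
      · exact Ideal.subset_span (by simp)
    · left; exact if_neg hj
  have hs := sub_aeval_mem _ _ hg p
  rw [h, sub_zero] at hs
  exact hs

/-- Extracting a variable from a factorization. -/
lemma X_dvd_of_factor (i : Fin 6) (p q r : A6)
    (hq : aeval (fun j : Fin 6 => if j = i then (0 : A6) else X j) q = q)
    (hq0 : q ≠ 0)
    (hr : aeval (fun j : Fin 6 => if j = i then (0 : A6) else X j) r = 0)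
    (h : p * q = r) : X i ∣ p := by
  apply X_dvd_of_aeval
  have e := congrArg (aeval (fun j : Fin 6 => if j = i then (0 : A6) else X j)) h
  rw [map_mul, hq, hr] at e
  rcases mul_eq_zero.mp e with h' | h'
  · exact h'
  · exact absurd h' hq0

lemma colon_mul_le (I : Ideal A6) (a b : A6) :
    I.colon (Ideal.span {b}) ≤ I.colon (Ideal.span {a * b}) := by
  intro x hx
  rw [Ideal.mem_colon_span_singleton] at hx ⊢
  have h : x * (a * b) = a * (x * b) := by ring
  rw [h]
  exact I.mul_mem_left a hx

lemma colon_bot (f : A6) (hf : f ≠ 0) :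
    (⊥ : Ideal A6).colon (Ideal.span {f}) = ⊥ := by
  ext x
  rw [Ideal.mem_colon_span_singleton, Ideal.mem_bot, Ideal.mem_bot]
  constructor
  · intro h
    rcases mul_eq_zero.mp h with h | h
    · exact h
    · exact absurd h hf
  · rintro rfl
    exact zero_mul f

lemma aeval_zero_of_mem_span_single {B : Type} [CommRing B] [Algebra ℚ B] (φ : A6 →ₐ[ℚ] B) {m e : A6}
    (hm : φ m = 0) (he : e ∈ Ideal.span {m}) : φ e = 0 := by
  obtain ⟨c, rfl⟩ := Ideal.mem_span_singleton.mp he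
  rw [map_mul, hm, zero_mul]

lemma aeval_zero_of_mem_span_pair {B : Type} [CommRing B] [Algebra ℚ B] (φ : A6 →ₐ[ℚ] B) {m m' e : A6}
    (hm : φ m = 0) (hm' : φ m' = 0) (he : e ∈ Ideal.span {m, m'}) : φ e = 0 := by
  obtain ⟨u, v, huv⟩ := Ideal.mem_span_pair.mp he
  rw [← huv, map_add, map_mul, map_mul, hm, hm', mul_zero, mul_zero, add_zero]

lemma eps_ne_zero : (DualNumber.eps : DualNumber ℚ) ≠ 0 := by
  intro h
  have h' := congrArg TrivSqZeroExt.snd h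
  rw [DualNumber.snd_eps, TrivSqZeroExt.snd_zero] at h'
  exact one_ne_zero h'

lemma eps_sq : (DualNumber.eps : DualNumber ℚ) ^ 2 = 0 := by
  rw [sq, DualNumber.eps_mul_eps]

/-- `x0 ↦ ε`, all other variables to `1`. -/
noncomputable def v0 : Fin 6 → DualNumber ℚ := fun j => if j = 0 then DualNumber.eps else 1

/-- `x1 ↦ ε`, all other variables to `1`. -/
noncomputable def v1 : Fin 6 → DualNumber ℚ := fun j => if j = 1 then DualNumber.eps else 1

/-- `x1 ↦ ε`, `x3 ↦ 0`, all other variables to `1`. -/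
noncomputable def v13 : Fin 6 → DualNumber ℚ :=
  fun j => if j = 1 then DualNumber.eps else if j = 3 then 0 else 1

/-! ### Minimality -/

lemma min1 : m1 ∉ Ideal.span {m2, m3} := by
  intro hmem
  have h := aeval_zero_of_mem_span_pair
    (aeval (fun j : Fin 6 => if j = 1 then (0 : ℚ) else 1))
    (by simp [m2_def]) (by simp [m3_def]) hmem
  simp [m1_def] at h

lemma min2 : m2 ∉ Ideal.span {m1, m3} := by
  intro hmem
  have h := aeval_zero_of_mem_span_pair
    (aeval (fun j : Fin 6 => if j = 2 then (0 : ℚ) else 1))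
    (by simp [m1_def]) (by simp [m3_def]) hmem
  simp [m2_def] at h

lemma min3 : m3 ∉ Ideal.span {m1, m2} := by
  intro hmem
  have h := aeval_zero_of_mem_span_pair
    (aeval (fun j : Fin 6 => if j = 3 ∨ j = 5 then (0 : ℚ) else 1))
    (by simp [m1_def]) (by simp [m2_def]) hmem
  simp [m3_def] at h

/-! ### Colon identities for the d-sequence property -/

lemma colon1 : (Ideal.span {m1}).colon (Ideal.span {m2 * m2}) =
    (Ideal.span {m1}).colon (Ideal.span {m2}) := by
  refine le_antisymm ?_ (colon_mul_le _ m2 m2)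
  intro p hp
  rw [Ideal.mem_colon_span_singleton, Ideal.mem_span_singleton] at hp ⊢
  obtain ⟨c, hc⟩ := hp
  have h2 : (X 2 : A6) ∣ p :=
    X_dvd_of_factor 2 p (m2 * m2) (m1 * c) (by simp [m2_def]) (mul_ne_zero hm2 hm2)
      (by simp [m1_def]) hc
  obtain ⟨a, rfl⟩ := h2
  have hc' : a * (m2 * m2) = (X 0 * X 3 * X 4) * c := by
    apply mul_left_cancel₀ (X_ne_zero (R := ℚ) (2 : Fin 6))
    calc (X 2 : A6) * (a * (m2 * m2)) = X 2 * a * (m2 * m2) := by ring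
      _ = m1 * c := hc
      _ = X 2 * ((X 0 * X 3 * X 4) * c) := by simp only [m1_def]; ring
  have h3 : (X 3 : A6) ∣ a :=
    X_dvd_of_factor 3 a (m2 * m2) ((X 0 * X 3 * X 4) * c) (by simp [m2_def])
      (mul_ne_zero hm2 hm2) (by simp) hc'
  obtain ⟨b, rfl⟩ := h3
  have hc'' : b * (m2 * m2) = (X 0 * X 4) * c := by
    apply mul_left_cancel₀ (X_ne_zero (R := ℚ) (3 : Fin 6))
    calc (X 3 : A6) * (b * (m2 * m2)) = X 3 * b * (m2 * m2) := by ring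
      _ = (X 0 * X 3 * X 4) * c := hc'
      _ = X 3 * ((X 0 * X 4) * c) := by ring
  have h4 : (X 4 : A6) ∣ b :=
    X_dvd_of_factor 4 b (m2 * m2) ((X 0 * X 4) * c) (by simp [m2_def])
      (mul_ne_zero hm2 hm2) (by simp) hc''
  obtain ⟨d, rfl⟩ := h4
  exact ⟨X 0 * X 1 * X 5 * d, by simp only [m1_def, m2_def]; ring⟩

lemma colon2 : (Ideal.span {m1}).colon (Ideal.span {m2 * m3}) =
    (Ideal.span {m1}).colon (Ideal.span {m3}) := by
  refine le_antisymm ?_ (colon_mul_le _ m2 m3)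
  intro p hp
  rw [Ideal.mem_colon_span_singleton, Ideal.mem_span_singleton] at hp ⊢
  obtain ⟨c, hc⟩ := hp
  have h3 : (X 3 : A6) ∣ p :=
    X_dvd_of_factor 3 p (m2 * m3) (m1 * c) (by simp [m2_def, m3_def]) (mul_ne_zero hm2 hm3)
      (by simp [m1_def]) hc
  obtain ⟨a, rfl⟩ := h3
  exact ⟨X 0 * X 1 ^ 2 * a, by simp only [m1_def, m3_def]; ring⟩

lemma colon3 : (Ideal.span {m1, m2}).colon (Ideal.span {m3 * m3}) =
    (Ideal.span {m1, m2}).colon (Ideal.span {m3}) := by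
  refine le_antisymm ?_ (colon_mul_le _ m3 m3)
  intro p hp
  rw [Ideal.mem_colon_span_singleton] at hp ⊢
  obtain ⟨u, v, huv⟩ := Ideal.mem_span_pair.mp hp
  have e := congrArg (aeval (fun j : Fin 6 => if j = 3 ∨ j = 5 then (0 : A6) else X j)) huv
  have hφ1 : aeval (fun j : Fin 6 => if j = 3 ∨ j = 5 then (0 : A6) else X j) m1 = 0 := by
    simp [m1_def]
  have hφ2 : aeval (fun j : Fin 6 => if j = 3 ∨ j = 5 then (0 : A6) else X j) m2 = 0 := by
    simp [m2_def]
  have hφ3 : aeval (fun j : Fin 6 => if j = 3 ∨ j = 5 then (0 : A6) else X j) m3 = m3 := by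
    simp [m3_def]
  rw [map_add, map_mul, map_mul, map_mul, map_mul, hφ1, hφ2, hφ3, mul_zero, mul_zero,
    add_zero] at e
  have hp0 : aeval (fun j : Fin 6 => if j = 3 ∨ j = 5 then (0 : A6) else X j) p = 0 := by
    rcases mul_eq_zero.mp e.symm with h | h
    · exact h
    · exact absurd h (mul_ne_zero hm3 hm3)
  have hmem := mem_span35_of_aeval p hp0
  obtain ⟨a, b, hab⟩ := Ideal.mem_span_pair.mp hmem
  refine Ideal.mem_span_pair.mpr ⟨a * (X 0 * X 1 ^ 2), b * (X 1 * X 2 * X 4), ?_⟩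
  rw [← hab]
  simp only [m1_def, m2_def, m3_def]
  ring

/-! ### Violations of the p-sequence property -/

lemma set_lt_one : {j : Fin 3 | j.val < 1} = ({0} : Set (Fin 3)) := by
  ext j; fin_cases j <;> simp

lemma set_lt_two : {j : Fin 3 | j.val < 2} = ({0, 1} : Set (Fin 3)) := by
  ext j; fin_cases j <;> simp

/-- order (m1, m2, m3) : fails `(m1) : m2 m3 = (m1) : m2`. -/
lemma notP1 (w : Fin 3 → A6) (h0 : w 0 = m1) (h1 : w 1 = m2) (h2 : w 2 = m3) :
    ¬ IsPSeq w := by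
  rintro ⟨-, hcol⟩
  have key := hcol 1 (by norm_num) 1 2 (by decide) (by decide)
  rw [set_lt_one, Set.image_singleton, h0, h1, h2] at key
  have hin : (X 3 : A6) ∈ (Ideal.span {m1}).colon (Ideal.span {m2 * m3}) := by
    rw [Ideal.mem_colon_span_singleton, Ideal.mem_span_singleton]
    exact ⟨X 0 ^ 3 * X 1 ^ 3 * X 5, by simp only [m1_def, m2_def, m3_def]; ring⟩
  rw [key, Ideal.mem_colon_span_singleton] at hin
  have h := aeval_zero_of_mem_span_single
    (aeval (fun j : Fin 6 => if j = 2 then (0 : ℚ) else 1)) (by simp [m1_def]) hin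
  simp [m2_def] at h

/-- order (m1, m3, m2) : fails `(m1, m3) : m2² = (m1, m3) : m2`. -/
lemma notP2 (w : Fin 3 → A6) (h0 : w 0 = m1) (h1 : w 1 = m3) (h2 : w 2 = m2) :
    ¬ IsPSeq w := by
  rintro ⟨-, hcol⟩
  have key := hcol 2 (by norm_num) 2 2 (by decide) (le_refl _)
  rw [set_lt_two, Set.image_insert_eq, Set.image_singleton, h0, h1, h2] at key
  have hin : (X 2 * X 4 : A6) ∈ (Ideal.span {m1, m3}).colon (Ideal.span {m2 * m2}) := by
    rw [Ideal.mem_colon_span_singleton]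
    exact Ideal.mem_span_pair.mpr ⟨0, X 0 ^ 2 * X 5 ^ 2, by simp only [m1_def, m2_def, m3_def]; ring⟩
  rw [key, Ideal.mem_colon_span_singleton] at hin
  have h := aeval_zero_of_mem_span_pair
    (aeval v13) (by simp [v13, m1_def]) (by simp [v13, m3_def, sq, DualNumber.eps_mul_eps]) hin
  simp [v13, m2_def] at h
  exact eps_ne_zero h

/-- order (m2, _, _) with m1 in position `t ≥ 1` : fails `(m2) : m1² = (m2) : m1`. -/
lemma notP34 (w : Fin 3 → A6) (h0 : w 0 = m2) (t : Fin 3) (ht : 1 ≤ t.val)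
    (hwt : w t = m1) : ¬ IsPSeq w := by
  rintro ⟨-, hcol⟩
  have key := hcol 1 (by norm_num) t t ht (le_refl _)
  rw [set_lt_one, Set.image_singleton, h0, hwt] at key
  have hin : (X 1 * X 5 : A6) ∈ (Ideal.span {m2}).colon (Ideal.span {m1 * m1}) := by
    rw [Ideal.mem_colon_span_singleton, Ideal.mem_span_singleton]
    exact ⟨X 2 ^ 2 * X 3 ^ 2 * X 4 ^ 2, by simp only [m1_def, m2_def]; ring⟩
  rw [key, Ideal.mem_colon_span_singleton] at hin
  have h := aeval_zero_of_mem_span_single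
    (aeval v0) (by simp [v0, m2_def, sq, DualNumber.eps_mul_eps]) hin
  simp [v0, m1_def] at h
  exact eps_ne_zero h

/-- order (m3, m1, _) : fails `(m3) : m1² = (m3) : m1`. -/
lemma notP5 (w : Fin 3 → A6) (h0 : w 0 = m3) (h1 : w 1 = m1) : ¬ IsPSeq w := by
  rintro ⟨-, hcol⟩
  have key := hcol 1 (by norm_num) 1 1 (by decide) (le_refl _)
  rw [set_lt_one, Set.image_singleton, h0, h1] at key
  have hin : (X 1 ^ 2 : A6) ∈ (Ideal.span {m3}).colon (Ideal.span {m1 * m1}) := by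
    rw [Ideal.mem_colon_span_singleton, Ideal.mem_span_singleton]
    exact ⟨X 2 * X 3 ^ 2 * X 4, by simp only [m1_def, m3_def]; ring⟩
  rw [key, Ideal.mem_colon_span_singleton] at hin
  have h := aeval_zero_of_mem_span_single
    (aeval v0) (by simp [v0, m3_def, sq, DualNumber.eps_mul_eps]) hin
  simp [v0, m1_def] at h
  exact eps_ne_zero h

/-- order (m3, m2, _) : fails `(m3) : m2² = (m3) : m2`. -/
lemma notP6 (w : Fin 3 → A6) (h0 : w 0 = m3) (h1 : w 1 = m2) : ¬ IsPSeq w := by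
  rintro ⟨-, hcol⟩
  have key := hcol 1 (by norm_num) 1 1 (by decide) (le_refl _)
  rw [set_lt_one, Set.image_singleton, h0, h1] at key
  have hin : (X 2 * X 4 : A6) ∈ (Ideal.span {m3}).colon (Ideal.span {m2 * m2}) := by
    rw [Ideal.mem_colon_span_singleton, Ideal.mem_span_singleton]
    exact ⟨X 0 ^ 2 * X 5 ^ 2, by simp only [m2_def, m3_def]; ring⟩
  rw [key, Ideal.mem_colon_span_singleton] at hin
  have h := aeval_zero_of_mem_span_single
    (aeval v1) (by simp [v1, m3_def, sq, DualNumber.eps_mul_eps]) hin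
  simp [v1, m2_def] at h
  exact eps_ne_zero h

end DPAux

open DPAux

/-- The sequence `x₁x₃x₄x₅, x₁²x₂x₆, x₁²x₂²x₃x₅` in `ℚ[x₁,…,x₆]` is a
`d`-sequence in the given order, but no permutation of it is a `p`-sequence. -/
theorem dSeq_not_pSeq_example :
    IsDSeq (![X 0 * X 2 * X 3 * X 4,
              X 0 ^ 2 * X 1 * X 5,
              X 0 ^ 2 * X 1 ^ 2 * X 2 * X 4] : Fin 3 → MvPolynomial (Fin 6) ℚ) ∧
    ∀ σ : Equiv.Perm (Fin 3),
      ¬ IsPSeq ((![X 0 * X 2 * X 3 * X 4,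
              X 0 ^ 2 * X 1 * X 5,
              X 0 ^ 2 * X 1 ^ 2 * X 2 * X 4] : Fin 3 → MvPolynomial (Fin 6) ℚ) ∘ σ) := by
  show IsDSeq (![m1, m2, m3]) ∧ ∀ σ : Equiv.Perm (Fin 3), ¬ IsPSeq ((![m1, m2, m3]) ∘ σ)
  constructor
  · constructor
    · -- minimal generation
      intro k
      fin_cases k
      · have hs : {j : Fin 3 | j ≠ ⟨0, by omega⟩} = ({1, 2} : Set (Fin 3)) := by
          ext j; fin_cases j <;> simp
        rw [hs, Set.image_insert_eq, Set.image_singleton]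
        have e1 : (![m1, m2, m3] : Fin 3 → A6) 1 = m2 := rfl
        have e2 : (![m1, m2, m3] : Fin 3 → A6) 2 = m3 := rfl
        have e0 : (![m1, m2, m3] : Fin 3 → A6) ⟨0, by omega⟩ = m1 := rfl
        rw [e1, e2, e0]
        exact min1
      · have hs : {j : Fin 3 | j ≠ ⟨1, by omega⟩} = ({0, 2} : Set (Fin 3)) := by
          ext j; fin_cases j <;> simp
        rw [hs, Set.image_insert_eq, Set.image_singleton]
        have e1 : (![m1, m2, m3] : Fin 3 → A6) 0 = m1 := rfl
        have e2 : (![m1, m2, m3] : Fin 3 → A6) 2 = m3 := rfl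
        have e0 : (![m1, m2, m3] : Fin 3 → A6) ⟨1, by omega⟩ = m2 := rfl
        rw [e1, e2, e0]
        exact min2
      · have hs : {j : Fin 3 | j ≠ ⟨2, by omega⟩} = ({0, 1} : Set (Fin 3)) := by
          ext j; fin_cases j <;> simp
        rw [hs, Set.image_insert_eq, Set.image_singleton]
        have e1 : (![m1, m2, m3] : Fin 3 → A6) 0 = m1 := rfl
        have e2 : (![m1, m2, m3] : Fin 3 → A6) 1 = m2 := rfl
        have e0 : (![m1, m2, m3] : Fin 3 → A6) ⟨2, by omega⟩ = m3 := rfl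
        rw [e1, e2, e0]
        exact min3
    · -- colon conditions
      intro i j hij
      fin_cases i <;> fin_cases j
      -- i = 0 cases
      · have hs : {k : Fin 3 | k < ⟨0, by omega⟩} = (∅ : Set (Fin 3)) := by
          ext k; simp [Fin.lt_def]
        rw [hs, Set.image_empty, Ideal.span_empty]
        show Submodule.colon ⊥ ((Ideal.span {m1 * m1} : Ideal A6) : Set A6) = Submodule.colon ⊥ ((Ideal.span {m1} : Ideal A6) : Set A6)
        rw [colon_bot _ (mul_ne_zero hm1 hm1), colon_bot _ hm1]
      · have hs : {k : Fin 3 | k < ⟨0, by omega⟩} = (∅ : Set (Fin 3)) := by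
          ext k; simp [Fin.lt_def]
        rw [hs, Set.image_empty, Ideal.span_empty]
        show Submodule.colon ⊥ ((Ideal.span {m1 * m2} : Ideal A6) : Set A6) = Submodule.colon ⊥ ((Ideal.span {m2} : Ideal A6) : Set A6)
        rw [colon_bot _ (mul_ne_zero hm1 hm2), colon_bot _ hm2]
      · have hs : {k : Fin 3 | k < ⟨0, by omega⟩} = (∅ : Set (Fin 3)) := by
          ext k; simp [Fin.lt_def]
        rw [hs, Set.image_empty, Ideal.span_empty]
        show Submodule.colon ⊥ ((Ideal.span {m1 * m3} : Ideal A6) : Set A6) = Submodule.colon ⊥ ((Ideal.span {m3} : Ideal A6) : Set A6)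
        rw [colon_bot _ (mul_ne_zero hm1 hm3), colon_bot _ hm3]
      -- i = 1, j = 0 : impossible
      · exact absurd hij (by decide)
      -- i = 1, j = 1
      · have hs : {k : Fin 3 | k < ⟨1, by omega⟩} = ({0} : Set (Fin 3)) := by
          ext k; fin_cases k <;> simp [Fin.lt_def]
        rw [hs, Set.image_singleton]
        exact colon1
      -- i = 1, j = 2
      · have hs : {k : Fin 3 | k < ⟨1, by omega⟩} = ({0} : Set (Fin 3)) := by
          ext k; fin_cases k <;> simp [Fin.lt_def]
        rw [hs, Set.image_singleton]
        exact colon2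
      -- i = 2, j = 0, 1 : impossible
      · exact absurd hij (by decide)
      · exact absurd hij (by decide)
      -- i = 2, j = 2
      · have hs : {k : Fin 3 | k < ⟨2, by omega⟩} = ({0, 1} : Set (Fin 3)) := by
          ext k; fin_cases k <;> simp [Fin.lt_def]
        rw [hs, Set.image_insert_eq, Set.image_singleton]
        exact colon3
  · -- no permutation is a p-sequence
    intro σ
    have hτ : ∀ τ : Equiv.Perm (Fin 3),
        (τ 0 = 0 ∧ τ 1 = 1 ∧ τ 2 = 2) ∨ (τ 0 = 0 ∧ τ 1 = 2 ∧ τ 2 = 1) ∨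
        (τ 0 = 1 ∧ τ 1 = 0 ∧ τ 2 = 2) ∨ (τ 0 = 1 ∧ τ 1 = 2 ∧ τ 2 = 0) ∨
        (τ 0 = 2 ∧ τ 1 = 0 ∧ τ 2 = 1) ∨ (τ 0 = 2 ∧ τ 1 = 1 ∧ τ 2 = 0) := by
      decide
    rcases hτ σ with ⟨h0, h1, h2⟩ | ⟨h0, h1, h2⟩ | ⟨h0, h1, h2⟩ | ⟨h0, h1, h2⟩ |
      ⟨h0, h1, h2⟩ | ⟨h0, h1, h2⟩
    · exact notP1 _ (by simp only [Function.comp_apply, h0]; rfl)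
        (by simp only [Function.comp_apply, h1]; rfl)
        (by simp only [Function.comp_apply, h2]; rfl)
    · exact notP2 _ (by simp only [Function.comp_apply, h0]; rfl)
        (by simp only [Function.comp_apply, h1]; rfl)
        (by simp only [Function.comp_apply, h2]; rfl)
    · exact notP34 _ (by simp only [Function.comp_apply, h0]; rfl) 1 (by decide)
        (by simp only [Function.comp_apply, h1]; rfl)
    · exact notP34 _ (by simp only [Function.comp_apply, h0]; rfl) 2 (by decide)
        (by simp only [Function.comp_apply, h2]; rfl)
    · exact notP5 _ (by simp only [Function.comp_apply, h0]; rfl)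
        (by simp only [Function.comp_apply, h1]; rfl)
    · exact notP6 _ (by simp only [Function.comp_apply, h0]; rfl)
        (by simp only [Function.comp_apply, h1]; rfl)
end

section
/- Let G be a tree on vertex set [n+1] with n edges. Then the edge binomials of G can be ordered as d_1,…,d_n so that they form a p-sequence in S = K[x_1,…,x_{n+1}, y_1,…,y_{n+1}]: they minimally generate J_G and, with d_0 = 0, (d_0,…,d_i) : (d_{i1} d_{i2}) = (d_0,…,d_i) : d_{i1} for all 0 ≤ i ≤ n−1 and i < i1 ≤ i2 ≤ n. -/
set_option linter.unusedSectionVars false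
set_option linter.unreachableTactic false
set_option linter.unusedTactic false
set_option linter.unusedVariables false
set_option linter.unnecessarySeqFocus false

open MvPolynomial

namespace PSeqAux

noncomputable section
open Classical

variable {K : Type*} [Field K] {α : Type*} [Fintype α] [DecidableEq α]

/-- The edge binomial `x_a y_b - x_b y_a`. -/
def fb (K : Type*) [Field K] {α : Type*} (a b : α) : MvPolynomial (α ⊕ α) K :=
  X (Sum.inl a) * X (Sum.inr b) - X (Sum.inl b) * X (Sum.inr a)

lemma fb_swap (a b : α) : fb K b a = - fb K a b := by
  unfold fb; ring

lemma fb_ne_zero {a b : α} (hab : a ≠ b) : fb K a b ≠ 0 := by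
  intro h
  have h1 : coeff (Finsupp.single (Sum.inl a) 1 + Finsupp.single (Sum.inr b) 1) (fb K a b) = 1 := by
    have hXX : ∀ (i j : α ⊕ α), (X i * X j : MvPolynomial (α ⊕ α) K)
        = monomial (Finsupp.single i 1 + Finsupp.single j 1) 1 := by
      intro i j
      rw [X, X, monomial_mul, one_mul]
    rw [fb, hXX, hXX, coeff_sub, coeff_monomial, coeff_monomial, if_pos rfl, if_neg]
    · ring
    · intro hEq
      have := DFunLike.congr_fun hEq (Sum.inl a)
      simp [Finsupp.single_apply, hab, (Ne.symm hab)] at this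
  rw [h] at h1
  simp at h1

/-- The graph `F` with all vertices in `W` deleted (edges incident to `W` removed). -/
def del (F : SimpleGraph α) (W : Finset α) : SimpleGraph α where
  Adj a b := F.Adj a b ∧ a ∉ W ∧ b ∉ W
  symm := by constructor; intro a b h; exact ⟨h.1.symm, h.2.2, h.2.1⟩
  loopless := by constructor; intro a h; exact F.loopless.irrefl a h.1

@[simp] lemma del_adj {F : SimpleGraph α} {W : Finset α} {a b : α} :
    (del F W).Adj a b ↔ F.Adj a b ∧ a ∉ W ∧ b ∉ W := Iff.rfl

/-- A vertex is internal if it has two distinct neighbours. -/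
def Internal (F : SimpleGraph α) (v : α) : Prop :=
  ∃ a b, a ≠ b ∧ F.Adj v a ∧ F.Adj v b

/-- Connected component of `v` in the deleted graph. -/
def ccomp (F : SimpleGraph α) (W : Finset α) (v : α) : (del F W).ConnectedComponent :=
  (del F W).connectedComponentMk v

/-- Index type for the target polynomial ring of `phi`. -/
abbrev Idx (F : SimpleGraph α) (W : Finset α) :=
  (del F W).ConnectedComponent ⊕ ((del F W).ConnectedComponent ⊕ α)

/-- images of the variables under the monomial map -/
def img (K : Type*) [Field K] (F : SimpleGraph α) (W : Finset α) :
    α ⊕ α → MvPolynomial (Idx F W) K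
  | Sum.inl v => if v ∈ W then 0 else
      X (Sum.inl (ccomp F W v)) * X (Sum.inr (Sum.inr v))
  | Sum.inr v => if v ∈ W then 0 else
      X (Sum.inr (Sum.inl (ccomp F W v))) * X (Sum.inr (Sum.inr v))

/-- exponent weights -/
def wt (F : SimpleGraph α) (W : Finset α) : α ⊕ α → (Idx F W →₀ ℕ)
  | Sum.inl v => Finsupp.single (Sum.inl (ccomp F W v)) 1
      + Finsupp.single (Sum.inr (Sum.inr v)) 1
  | Sum.inr v => Finsupp.single (Sum.inr (Sum.inl (ccomp F W v))) 1
      + Finsupp.single (Sum.inr (Sum.inr v)) 1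

/-- pushforward of an exponent vector -/
def Em (F : SimpleGraph α) (W : Finset α) (m : (α ⊕ α) →₀ ℕ) : Idx F W →₀ ℕ :=
  m.sum fun z k => k • wt F W z

/-- an exponent vector is clean if it does not involve variables from `W` -/
def Clean (W : Finset α) (m : (α ⊕ α) →₀ ℕ) : Prop :=
  ∀ v ∈ W, m (Sum.inl v) = 0 ∧ m (Sum.inr v) = 0

lemma monomial_prod {ι : Type*} (s : Finset ι) (f : ι → ((Idx (α := α) F W) →₀ ℕ)) :
    (∏ z ∈ s, (monomial (f z) (1 : K))) = monomial (∑ z ∈ s, f z) 1 := by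
  induction s using Finset.cons_induction with
  | empty => simp
  | cons a s ha ih =>
      rw [Finset.prod_cons, Finset.sum_cons, ih, monomial_mul, one_mul]

lemma img_clean_eq {F : SimpleGraph α} {W : Finset α} {z : α ⊕ α}
    (hz : (Sum.elim id id z) ∉ W) :
    img K F W z = monomial (wt F W z) 1 := by
  cases z with
  | inl v =>
      simp only [Sum.elim_inl, id] at hz
      rw [img, if_neg hz, wt, X, X, monomial_mul, one_mul]
  | inr v =>
      simp only [Sum.elim_inr, id] at hz
      rw [img, if_neg hz, wt, X, X, monomial_mul, one_mul]

lemma phi_monomial_clean {F : SimpleGraph α} {W : Finset α} {m : (α ⊕ α) →₀ ℕ}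
    (hm : Clean W m) (c : K) :
    aeval (img K F W) (monomial m c) = monomial (Em F W m) c := by
  rw [aeval_monomial]
  have : (m.prod fun z k => img K F W z ^ k) = monomial (Em F W m) 1 := by
    rw [Finsupp.prod, Em, Finsupp.sum]
    rw [← monomial_prod]
    apply Finset.prod_congr rfl
    intro z hz
    have hzW : (Sum.elim id id z) ∉ W := by
      intro hmem
      cases z with
      | inl v =>
          simp only [Sum.elim_inl, id] at hmem
          exact (Finsupp.mem_support_iff.mp hz) (hm v hmem).1
      | inr v =>
          simp only [Sum.elim_inr, id] at hmem
          exact (Finsupp.mem_support_iff.mp hz) (hm v hmem).2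
    rw [img_clean_eq hzW, monomial_pow, one_pow]
  rw [this]
  rw [algebraMap_eq, C_mul_monomial, mul_one]

lemma phi_monomial_unclean {F : SimpleGraph α} {W : Finset α} {m : (α ⊕ α) →₀ ℕ}
    (hm : ¬ Clean W m) (c : K) :
    aeval (img K F W) (monomial m c) = 0 := by
  rw [aeval_monomial]
  simp only [Clean, not_forall] at hm
  obtain ⟨v, hvW, hv⟩ := hm
  have : ∃ z : α ⊕ α, (Sum.elim id id z) ∈ W ∧ m z ≠ 0 := by
    rcases not_and_or.mp hv with h | h
    · exact ⟨Sum.inl v, by simpa using hvW, h⟩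
    · exact ⟨Sum.inr v, by simpa using hvW, h⟩
  obtain ⟨z, hzW, hz⟩ := this
  have himg : img K F W z = 0 := by
    cases z with
    | inl v => simp only [Sum.elim_inl, id] at hzW; rw [img, if_pos hzW]
    | inr v => simp only [Sum.elim_inr, id] at hzW; rw [img, if_pos hzW]
  have : (m.prod fun z k => img K F W z ^ k) = 0 := by
    apply Finset.prod_eq_zero (Finsupp.mem_support_iff.mpr hz)
    simp only []
    rw [himg, zero_pow hz]
  rw [this, mul_zero]


variable {F : SimpleGraph α} {W : Finset α}

lemma Em_apply (m : (α ⊕ α) →₀ ℕ) (i : Idx F W) :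
    Em F W m i = ∑ v : α, m (Sum.inl v) * wt F W (Sum.inl v) i
      + ∑ v : α, m (Sum.inr v) * wt F W (Sum.inr v) i := by
  have h1 : Em F W m i = ∑ z ∈ m.support, m z * wt F W z i := by
    rw [Em, Finsupp.sum, Finsupp.finset_sum_apply]
    apply Finset.sum_congr rfl
    intro z _
    rw [Finsupp.smul_apply, smul_eq_mul]
  rw [h1]
  rw [Finset.sum_subset (Finset.subset_univ _) (by
    intro z _ hz
    rw [Finsupp.notMem_support_iff.mp hz, zero_mul])]
  rw [Fintype.sum_sum_type]

lemma Em_apply_U (m : (α ⊕ α) →₀ ℕ) (v : α) :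
    Em F W m (Sum.inr (Sum.inr v)) = m (Sum.inl v) + m (Sum.inr v) := by
  rw [Em_apply]
  have h1 : ∀ u : α, (wt F W (Sum.inl u)) (Sum.inr (Sum.inr v))
      = if u = v then 1 else 0 := by
    intro u
    simp [wt, Finsupp.single_apply]
  have h2 : ∀ u : α, (wt F W (Sum.inr u)) (Sum.inr (Sum.inr v))
      = if u = v then 1 else 0 := by
    intro u
    simp [wt, Finsupp.single_apply]
  simp only [h1, h2, mul_ite, mul_one, mul_zero]
  rw [Finset.sum_ite_eq' Finset.univ v (fun u => m (Sum.inl u)),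
      Finset.sum_ite_eq' Finset.univ v (fun u => m (Sum.inr u))]
  simp

lemma Em_apply_A (m : (α ⊕ α) →₀ ℕ) (C : (del F W).ConnectedComponent) :
    Em F W m (Sum.inl C)
      = ∑ u ∈ Finset.univ.filter (fun u => ccomp F W u = C), m (Sum.inl u) := by
  rw [Em_apply]
  have h1 : ∀ u : α, (wt F W (Sum.inl u)) (Sum.inl C)
      = if ccomp F W u = C then 1 else 0 := by
    intro u
    simp [wt, Finsupp.single_apply]
  have h2 : ∀ u : α, (wt F W (Sum.inr u)) (Sum.inl C) = 0 := by
    intro u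
    simp [wt, Finsupp.single_apply]
  simp only [h1, h2, mul_ite, mul_one, mul_zero]
  rw [Finset.sum_ite, Finset.sum_const_zero]
  simp [Finset.sum_filter]


-- PART 3: edgeSpan, kernel containment, coefficient extraction
section Part3
variable {F : SimpleGraph α} {W : Finset α}

/-- The binomial edge ideal of `F` (with both orientations as generators). -/
def edgeSpan (K : Type*) [Field K] (F : SimpleGraph α) : Ideal (MvPolynomial (α ⊕ α) K) :=
  Ideal.span {p | ∃ a b, F.Adj a b ∧ p = fb K a b}

lemma phi_fb_adj {a b : α} (hab : F.Adj a b) :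
    aeval (img K F W) (fb K a b) = 0 := by
  by_cases ha : a ∈ W
  · simp [fb, img, ha]
  · by_cases hb : b ∈ W
    · simp [fb, img, hb]
    · have hcc : ccomp F W a = ccomp F W b := by
        apply SimpleGraph.ConnectedComponent.sound
        exact SimpleGraph.Adj.reachable (by exact ⟨hab, ha, hb⟩)
      simp only [fb, map_sub, map_mul, aeval_X, img, if_neg ha, if_neg hb, hcc]
      ring

lemma edgeSpan_ker {p : MvPolynomial (α ⊕ α) K} (hp : p ∈ edgeSpan K F) :
    aeval (img K F W) p = 0 := by
  have hsub : {q : MvPolynomial (α ⊕ α) K | ∃ a b, F.Adj a b ∧ q = fb K a b}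
      ⊆ (RingHom.ker (aeval (img K F W) : MvPolynomial (α ⊕ α) K →ₐ[K] _).toRingHom : Set _) := by
    rintro q ⟨a, b, hab, rfl⟩
    exact phi_fb_adj hab
  have := Ideal.span_le.mpr hsub hp
  exact this

lemma clean_of_Em_eq {m m₀ : (α ⊕ α) →₀ ℕ} (h : Em F W m = Em F W m₀)
    (h₀ : Clean W m₀) : Clean W m := by
  intro v hv
  have := DFunLike.congr_fun h (Sum.inr (Sum.inr v))
  rw [Em_apply_U, Em_apply_U] at this
  have h0 := h₀ v hv
  omega

/-- coefficient extraction : if `φ_W h = 0` then the class sums of coefficients vanish -/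
lemma class_sum_eq_zero {h : MvPolynomial (α ⊕ α) K} (hker : aeval (img K F W) h = 0)
    {m₀ : (α ⊕ α) →₀ ℕ} (h₀ : Clean W m₀) :
    ∑ m ∈ h.support.filter (fun m => Em F W m = Em F W m₀), h.coeff m = 0 := by
  have hh : aeval (img K F W) h
      = ∑ m ∈ h.support, aeval (img K F W) (monomial m (h.coeff m)) := by
    conv_lhs => rw [h.as_sum]
    rw [map_sum]
  have hco : coeff (Em F W m₀) (aeval (img K F W) h) = 0 := by
    rw [hker]; simp
  rw [hh] at hco
  rw [MvPolynomial.coeff_sum] at hco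
  rw [← hco]
  rw [Finset.sum_filter]
  apply Finset.sum_congr rfl
  intro m _
  by_cases hc : Clean W m
  · rw [phi_monomial_clean hc, coeff_monomial]
  · rw [phi_monomial_unclean hc]
    have : ¬ (Em F W m = Em F W m₀) := fun he => hc (clean_of_Em_eq he h₀)
    rw [if_neg this]
    simp

end Part3

-- PART 4: moves, transport, connectivity
section Part4
variable {F : SimpleGraph α} {W : Finset α}

/-- total degree of vertex `v` in an exponent vector -/
def mu (m : (α ⊕ α) →₀ ℕ) (v : α) : ℕ := m (Sum.inl v) + m (Sum.inr v)

/-- move one `x`-unit from `v` to `w` -/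
def shift (m : (α ⊕ α) →₀ ℕ) (v w : α) : (α ⊕ α) →₀ ℕ :=
  m + Finsupp.single (Sum.inl w) 1 + Finsupp.single (Sum.inr v) 1
    - Finsupp.single (Sum.inl v) 1 - Finsupp.single (Sum.inr w) 1

lemma shift_apply_inl (m : (α ⊕ α) →₀ ℕ) (v w u : α) :
    shift m v w (Sum.inl u)
      = m (Sum.inl u) + (if u = w then 1 else 0) - (if u = v then 1 else 0) := by
  simp [shift, Finsupp.tsub_apply, Finsupp.add_apply, Finsupp.single_apply, eq_comm]

lemma shift_apply_inr (m : (α ⊕ α) →₀ ℕ) (v w u : α) :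
    shift m v w (Sum.inr u)
      = m (Sum.inr u) + (if u = v then 1 else 0) - (if u = w then 1 else 0) := by
  simp [shift, Finsupp.tsub_apply, Finsupp.add_apply, Finsupp.single_apply, eq_comm]

lemma shift_self (m : (α ⊕ α) →₀ ℕ) (v : α) : shift m v v = m := by
  ext z
  cases z with
  | inl u => rw [shift_apply_inl]; split_ifs <;> omega
  | inr u => rw [shift_apply_inr]; split_ifs <;> omega

/-- a single move along an edge of `F` -/
def Move (F : SimpleGraph α) (m m' : (α ⊕ α) →₀ ℕ) : Prop :=
  ∃ v w, F.Adj v w ∧ 0 < m (Sum.inl v) ∧ 0 < m (Sum.inr w) ∧ m' = shift m v w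

lemma move_symm : Symmetric (Move F) := by
  rintro m m' ⟨v, w, hadj, hv, hw, rfl⟩
  have hne : v ≠ w := hadj.ne
  refine ⟨w, v, hadj.symm, ?_, ?_, ?_⟩
  · rw [shift_apply_inl, if_pos rfl, if_neg (Ne.symm hne)]; omega
  · rw [shift_apply_inr, if_pos rfl, if_neg hne]; omega
  · ext z
    cases z with
    | inl u =>
        rw [shift_apply_inl, shift_apply_inl]
        split_ifs <;> subst_vars <;> first | omega | simp_all
    | inr u =>
        rw [shift_apply_inr, shift_apply_inr]
        split_ifs <;> subst_vars <;> first | omega | simp_all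

lemma mu_shift {m : (α ⊕ α) →₀ ℕ} {v w : α} (hv : 0 < m (Sum.inl v))
    (hw : 0 < m (Sum.inr w)) (u : α) : mu (shift m v w) u = mu m u := by
  unfold mu
  rw [shift_apply_inl, shift_apply_inr]
  split_ifs <;> subst_vars <;> first | omega | simp_all

lemma shift_shift₁ {m : (α ⊕ α) →₀ ℕ} {x z y : α} (hx : 0 < m (Sum.inl x))
    (hz : 0 < m (Sum.inr z)) (hy : 0 < m (Sum.inr y))
    (hxz : x ≠ z) (hzy : z ≠ y) (hxy : x ≠ y) :
    shift (shift m x z) z y = shift m x y := by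
  ext u
  cases u with
  | inl u =>
      rw [shift_apply_inl, shift_apply_inl, shift_apply_inl]
      split_ifs <;> subst_vars <;> first | omega | simp_all
  | inr u =>
      rw [shift_apply_inr, shift_apply_inr, shift_apply_inr]
      split_ifs <;> subst_vars <;> first | omega | simp_all

lemma shift_shift₂ {m : (α ⊕ α) →₀ ℕ} {x z y : α} (hx : 0 < m (Sum.inl x))
    (hz : 0 < m (Sum.inl z)) (hy : 0 < m (Sum.inr y))
    (hxz : x ≠ z) (hzy : z ≠ y) (hxy : x ≠ y) :
    shift (shift m z y) x z = shift m x y := by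
  ext u
  cases u with
  | inl u =>
      rw [shift_apply_inl, shift_apply_inl, shift_apply_inl]
      split_ifs <;> subst_vars <;> first | omega | simp_all
  | inr u =>
      rw [shift_apply_inr, shift_apply_inr, shift_apply_inr]
      split_ifs <;> subst_vars <;> first | omega | simp_all

/-- transport of one unit along a walk in the deleted graph -/
lemma transport {x y : α} (p : (del F W).Walk x y) :
    ∀ (m : (α ⊕ α) →₀ ℕ), (∀ u ∈ p.support, 0 < mu m u) →
      0 < m (Sum.inl x) → 0 < m (Sum.inr y) →
      Relation.ReflTransGen (Move F) m (shift m x y) := by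
  induction p with
  | nil =>
      intro m _ _ _
      rw [shift_self]
  | @cons x z y hadj q ih =>
      intro m hsupp hx hy
      have hFxz : F.Adj x z := hadj.1
      have hxz : x ≠ z := hFxz.ne
      by_cases hxy : x = y
      · subst hxy
        rw [shift_self]
      by_cases hzy : z = y
      · subst hzy
        exact Relation.ReflTransGen.single ⟨x, z, hFxz, hx, hy, rfl⟩
      by_cases h1 : 0 < m (Sum.inr z)
      · -- move x→z first, then transport z→y
        have hstep : Move F m (shift m x z) := ⟨x, z, hFxz, hx, h1, rfl⟩
        have hm1z : 0 < (shift m x z) (Sum.inl z) := by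
          rw [shift_apply_inl, if_pos rfl, if_neg (Ne.symm hxz)]; omega
        have hm1y : 0 < (shift m x z) (Sum.inr y) := by
          rw [shift_apply_inr, if_neg (Ne.symm hxy), if_neg (Ne.symm hzy)]; omega
        have hrest := ih (shift m x z) (by
          intro u hu
          rw [mu_shift hx h1]
          exact hsupp u (by simp [hu]))
          hm1z hm1y
        have hch := Relation.ReflTransGen.head hstep hrest
        rwa [shift_shift₁ hx h1 hy hxz hzy hxy] at hch
      · -- transport z→y first, then move x→z
        have h2 : 0 < m (Sum.inl z) := by
          have := hsupp z (by simp)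
          unfold mu at this
          omega
        have hrest := ih m (by
          intro u hu
          exact hsupp u (by simp [hu])) h2 hy
        have hm1x : 0 < (shift m z y) (Sum.inl x) := by
          rw [shift_apply_inl, if_neg hxy, if_neg hxz]; omega
        have hm1z : 0 < (shift m z y) (Sum.inr z) := by
          rw [shift_apply_inr, if_pos rfl, if_neg hzy]; omega
        have hstep : Move F (shift m z y) (shift (shift m z y) x z) :=
          ⟨x, z, hFxz, hm1x, hm1z, rfl⟩
        have hch := Relation.ReflTransGen.tail hrest hstep
        rwa [shift_shift₂ hx h2 hy hxz hzy hxy] at hch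

end Part4

-- PART 5: connectivity and the kernel theorem
section Part5
variable {F : SimpleGraph α} {W : Finset α}

lemma path_supp_mu (g : α → ℕ)
    (hOK : ∀ u, u ∉ W → Internal F u → 0 < g u) :
    ∀ {x y : α} (p : (del F W).Walk x y), p.IsPath → 0 < g x → 0 < g y →
      ∀ u ∈ p.support, 0 < g u := by
  intro x y p
  induction p with
  | nil =>
      intro _ hx _ u hu
      simp only [SimpleGraph.Walk.support_nil, List.mem_cons, List.not_mem_nil, or_false] at hu
      subst hu; exact hx
  | @cons x z y hadj q ih =>
      intro hp hx hy u hu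
      rw [SimpleGraph.Walk.support_cons, List.mem_cons] at hu
      have hz : 0 < g z := by
        by_cases hzy : z = y
        · subst hzy; exact hy
        · cases q with
          | nil => exact absurd rfl hzy
          | @cons z z₂ y hadj₂ q₂ =>
              have hxz₂ : x ≠ z₂ := by
                intro hEq
                have hxs : x ∉ (SimpleGraph.Walk.cons hadj₂ q₂).support :=
                  ((SimpleGraph.Walk.cons_isPath_iff _ _).mp hp).2
                apply hxs
                rw [hEq, SimpleGraph.Walk.support_cons]
                exact List.mem_cons_of_mem _ q₂.start_mem_support
              have hzW : z ∉ W := hadj.2.2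
              have hInt : Internal F z := ⟨x, z₂, hxz₂, hadj.1.symm, hadj₂.1⟩
              exact hOK z hzW hInt
      rcases hu with rfl | hu
      · exact hx
      · exact ih ((SimpleGraph.Walk.cons_isPath_iff _ _).mp hp).1 hz hy u hu

/-- sum of `x`-degrees over the component of `v` -/
def compSum (F : SimpleGraph α) (W : Finset α) (m : (α ⊕ α) →₀ ℕ) (v : α) : ℕ :=
  ∑ u ∈ Finset.univ.filter (fun u => ccomp F W u = ccomp F W v), m (Sum.inl u)

/-- the measure used for the connectivity induction -/
def dmeas (m m' : (α ⊕ α) →₀ ℕ) : ℕ :=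
  ∑ v : α, ((m (Sum.inl v) - m' (Sum.inl v)) + (m' (Sum.inl v) - m (Sum.inl v)))

lemma eq_of_dmeas_zero {m m' : (α ⊕ α) →₀ ℕ} (hd : dmeas m m' = 0)
    (hmu : ∀ v, mu m v = mu m' v) : m = m' := by
  have heq : ∀ v, m (Sum.inl v) = m' (Sum.inl v) := by
    intro v
    have h1 : (m (Sum.inl v) - m' (Sum.inl v)) + (m' (Sum.inl v) - m (Sum.inl v)) = 0 := by
      have h2 : (m (Sum.inl v) - m' (Sum.inl v)) + (m' (Sum.inl v) - m (Sum.inl v))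
          ≤ dmeas m m' := by
        unfold dmeas
        exact Finset.single_le_sum (f := fun v =>
          (m (Sum.inl v) - m' (Sum.inl v)) + (m' (Sum.inl v) - m (Sum.inl v)))
          (fun i _ => Nat.zero_le _) (Finset.mem_univ v)
      omega
    omega
  ext z
  cases z with
  | inl v => exact heq v
  | inr v => have h1 := hmu v; have h2 := heq v; unfold mu at h1; omega

/-- One transport step towards equalizing `m` and `mtgt`, where `m` has excess at `v`. -/
lemma conn_step {m mtgt : (α ⊕ α) →₀ ℕ} {v : α}
    (hmu : ∀ u, mu m u = mu mtgt u)
    (hcs : ∀ u, compSum F W m u = compSum F W mtgt u)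
    (hInt : ∀ u, u ∉ W → Internal F u → 0 < mu m u)
    (hgt : mtgt (Sum.inl v) < m (Sum.inl v)) :
    ∃ m₂, Relation.ReflTransGen (Move F) m m₂ ∧
      (∀ u, mu m₂ u = mu m u) ∧
      (∀ u, compSum F W m₂ u = compSum F W m u) ∧
      dmeas m₂ mtgt + 2 ≤ dmeas m mtgt := by
  have hvpos : 0 < m (Sum.inl v) := by omega
  obtain ⟨w, hwc, hw⟩ :
      ∃ w, ccomp F W w = ccomp F W v ∧ m (Sum.inl w) < mtgt (Sum.inl w) := by
    by_contra hcon
    push_neg at hcon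
    have hlt : compSum F W mtgt v < compSum F W m v := by
      unfold compSum
      apply Finset.sum_lt_sum
      · intro u hu
        rw [Finset.mem_filter] at hu
        exact hcon u hu.2
      · exact ⟨v, by simp, hgt⟩
    rw [hcs v] at hlt
    omega
  have hwv : w ≠ v := by intro h; subst h; omega
  have hmuv : 0 < mu m v := by unfold mu; omega
  have hmuw : 0 < mu m w := by
    have := hmu w
    unfold mu at *
    omega
  have hwinr : 0 < m (Sum.inr w) := by
    have h1 := hmu w
    unfold mu at h1
    omega
  have hreach : (del F W).Reachable v w :=
    (SimpleGraph.ConnectedComponent.exact hwc).symm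
  obtain ⟨wk⟩ := hreach
  have hpath := wk.toPath
  have htr := transport (W := W) hpath.1 m
    (path_supp_mu (mu m) hInt hpath.1 hpath.2 hmuv hmuw) hvpos hwinr
  refine ⟨shift m v w, htr, mu_shift hvpos hwinr, ?_, ?_⟩
  · intro u
    unfold compSum
    have hkey : ∀ x : α, x ∈ Finset.univ.filter (fun x => ccomp F W x = ccomp F W u) →
        (shift m v w) (Sum.inl x) + (if x = v then 1 else 0)
          = m (Sum.inl x) + (if x = w then 1 else 0) := by
      intro x _
      rw [shift_apply_inl]
      split_ifs <;> subst_vars <;> first | omega | simp_all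
    have h1 := Finset.sum_congr rfl hkey
    rw [Finset.sum_add_distrib, Finset.sum_add_distrib] at h1
    rw [Finset.sum_ite_eq' _ v (fun _ => 1), Finset.sum_ite_eq' _ w (fun _ => 1)] at h1
    have hmem : (v ∈ Finset.univ.filter (fun x => ccomp F W x = ccomp F W u)) ↔
        (w ∈ Finset.univ.filter (fun x => ccomp F W x = ccomp F W u)) := by
      simp only [Finset.mem_filter, Finset.mem_univ, true_and]
      rw [hwc]
    by_cases hv' : v ∈ Finset.univ.filter (fun x => ccomp F W x = ccomp F W u)
    · rw [if_pos hv', if_pos (hmem.mp hv')] at h1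
      omega
    · rw [if_neg hv', if_neg (fun hwmem => hv' (hmem.mpr hwmem))] at h1
      omega
  · have hkey : ∀ u : α,
        (((shift m v w) (Sum.inl u) - mtgt (Sum.inl u))
          + (mtgt (Sum.inl u) - (shift m v w) (Sum.inl u)))
          + (if u = v then 1 else 0) + (if u = w then 1 else 0)
        = ((m (Sum.inl u) - mtgt (Sum.inl u)) + (mtgt (Sum.inl u) - m (Sum.inl u))) := by
      intro u
      rw [shift_apply_inl]
      split_ifs <;> subst_vars <;> first | omega | simp_all
    have hsum := Finset.sum_congr rfl (fun u (_ : u ∈ Finset.univ) => hkey u)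
    unfold dmeas
    rw [Finset.sum_add_distrib, Finset.sum_add_distrib] at hsum
    rw [Finset.sum_ite_eq' Finset.univ v (fun _ => 1),
        Finset.sum_ite_eq' Finset.univ w (fun _ => 1)] at hsum
    simp only [Finset.mem_univ, if_pos] at hsum
    omega

lemma conn_aux :
    ∀ (N : ℕ) (m m' : (α ⊕ α) →₀ ℕ), dmeas m m' ≤ N →
      (∀ v, mu m v = mu m' v) →
      (∀ v, compSum F W m v = compSum F W m' v) →
      (∀ u, u ∉ W → Internal F u → 0 < mu m u) →
      Relation.ReflTransGen (Move F) m m' := by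
  intro N
  induction N with
  | zero =>
      intro m m' hd hmu _ _
      rw [eq_of_dmeas_zero (Nat.le_zero.mp hd) hmu]
  | succ N ih =>
      intro m m' hd hmu hcs hInt
      by_cases hd0 : dmeas m m' = 0
      · rw [eq_of_dmeas_zero hd0 hmu]
      have : ∃ v, m (Sum.inl v) ≠ m' (Sum.inl v) := by
        by_contra hcon
        push_neg at hcon
        apply hd0
        unfold dmeas
        apply Finset.sum_eq_zero
        intro v _
        rw [hcon v]
        omega
      obtain ⟨v, hv⟩ := this
      rcases Nat.lt_or_ge (m' (Sum.inl v)) (m (Sum.inl v)) with hgt | hge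
      · obtain ⟨m₂, hchain, hmu₂, hcs₂, hd₂⟩ := conn_step hmu hcs hInt hgt
        have hrec := ih m₂ m' (by omega)
          (fun u => (hmu₂ u).trans (hmu u))
          (fun u => (hcs₂ u).trans (hcs u))
          (fun u hu hI => (hmu₂ u) ▸ hInt u hu hI)
        exact hchain.trans hrec
      · have hgt' : m (Sum.inl v) < m' (Sum.inl v) := by omega
        have hmu' : ∀ u, mu m' u = mu m u := fun u => (hmu u).symm
        have hcs' : ∀ u, compSum F W m' u = compSum F W m u := fun u => (hcs u).symm
        have hInt' : ∀ u, u ∉ W → Internal F u → 0 < mu m' u := by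
          intro u hu hI
          rw [← hmu u]
          exact hInt u hu hI
        obtain ⟨m₂, hchain, hmu₂, hcs₂, hd₂⟩ := conn_step hmu' hcs' hInt' hgt'
        have hdm : dmeas m m₂ + 2 ≤ dmeas m m' := by
          have h1 : dmeas m m₂ = dmeas m₂ m := by
            unfold dmeas
            apply Finset.sum_congr rfl
            intro u _
            omega
          have h2 : dmeas m m' = dmeas m' m := by
            unfold dmeas
            apply Finset.sum_congr rfl
            intro u _
            omega
          omega
        have hrec := ih m m₂ (by omega)
          (fun u => (hmu u).trans (hmu₂ u).symm)
          (fun u => (hcs u).trans (hcs₂ u).symm)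
          hInt
        have hsymm : Relation.ReflTransGen (Move F) m₂ m' :=
          by haveI : Std.Symm (Move F) := ⟨fun a b h => move_symm h⟩; exact Std.Symm.symm _ _ hchain
        exact hrec.trans hsymm

/-- difference of monomials along a single move lies in the edge ideal -/
lemma move_diff_mem {m m' : (α ⊕ α) →₀ ℕ} (hmv : Move F m m') :
    (monomial m (1 : K)) - monomial m' 1 ∈ edgeSpan K F := by
  obtain ⟨v, w, hadj, hv, hw, rfl⟩ := hmv
  set m₀ := m - Finsupp.single (Sum.inl v) 1 - Finsupp.single (Sum.inr w) 1 with hm₀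
  have hvw : v ≠ w := hadj.ne
  have key : ∀ z, m₀ z = m z - (if z = Sum.inl v then 1 else 0)
      - (if z = Sum.inr w then 1 else 0) := by
    intro z
    rw [hm₀]
    simp [Finsupp.tsub_apply, Finsupp.single_apply, eq_comm]
  have e₁ : m₀ + (Finsupp.single (Sum.inl v) 1 + Finsupp.single (Sum.inr w) 1) = m := by
    ext z
    rw [Finsupp.add_apply, Finsupp.add_apply, key z, Finsupp.single_apply,
      Finsupp.single_apply]
    rcases z with u | u <;>
      simp only [Sum.inl.injEq, Sum.inr.injEq, reduceCtorEq, if_false] <;>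
      split_ifs <;> subst_vars <;>
      first | omega | (exact absurd rfl (by assumption))
  have e₂ : m₀ + (Finsupp.single (Sum.inl w) 1 + Finsupp.single (Sum.inr v) 1)
      = shift m v w := by
    ext z
    rw [Finsupp.add_apply, Finsupp.add_apply, key z, Finsupp.single_apply,
      Finsupp.single_apply]
    rcases z with u | u
    · rw [shift_apply_inl]
      simp only [Sum.inl.injEq, Sum.inr.injEq, reduceCtorEq, if_false]
      split_ifs <;> subst_vars <;>
        first | omega | (exact absurd rfl (by assumption))
    · rw [shift_apply_inr]
      simp only [Sum.inl.injEq, Sum.inr.injEq, reduceCtorEq, if_false]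
      split_ifs <;> subst_vars <;>
        first | omega | (exact absurd rfl (by assumption))
  have hXX : ∀ (i j : α ⊕ α), (X i * X j : MvPolynomial (α ⊕ α) K)
      = monomial (Finsupp.single i 1 + Finsupp.single j 1) 1 := by
    intro i j
    rw [X, X, monomial_mul, one_mul]
  have hfb : (monomial m₀ (1:K)) * fb K v w
      = monomial m 1 - monomial (shift m v w) 1 := by
    rw [fb, mul_sub, hXX, hXX, monomial_mul, monomial_mul, one_mul, e₁, e₂]
  rw [← hfb]
  exact Ideal.mul_mem_left _ _ (Ideal.subset_span ⟨v, w, hadj, rfl⟩)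

lemma chain_diff_mem {m m' : (α ⊕ α) →₀ ℕ}
    (hch : Relation.ReflTransGen (Move F) m m') :
    (monomial m (1 : K)) - monomial m' 1 ∈ edgeSpan K F := by
  induction hch with
  | refl => simp
  | tail hbc hstep ih =>
      have := Ideal.add_mem _ ih (move_diff_mem (K := K) hstep)
      simpa using this

/-- **Main kernel theorem**: a polynomial lying in all the monomial-map kernels
belongs to the binomial edge ideal. -/
theorem main_ker (F : SimpleGraph α) (h : MvPolynomial (α ⊕ α) K)
    (H : ∀ W : Finset α, (∀ v ∈ W, Internal F v) → aeval (img K F W) h = 0) :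
    h ∈ edgeSpan K F := by
  suffices key : ∀ (N : ℕ) (h : MvPolynomial (α ⊕ α) K), h.support.card ≤ N →
      (∀ W : Finset α, (∀ v ∈ W, Internal F v) → aeval (img K F W) h = 0) →
      h ∈ edgeSpan K F by
    exact key _ h le_rfl H
  intro N
  induction N with
  | zero =>
      intro h hc _
      have : h.support = ∅ := Finset.card_eq_zero.mp (Nat.le_zero.mp hc)
      rw [MvPolynomial.support_eq_empty.mp this]
      exact Ideal.zero_mem _
  | succ N ih =>
      intro h hc H
      by_cases h0 : h = 0
      · rw [h0]; exact Ideal.zero_mem _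
      obtain ⟨m₀, hm₀⟩ := MvPolynomial.support_nonempty.mpr h0
      set W₀ : Finset α := Finset.univ.filter (fun v => Internal F v ∧ mu m₀ v = 0)
        with hW₀
      have hW₀Int : ∀ v ∈ W₀, Internal F v := by
        intro v hv
        rw [hW₀, Finset.mem_filter] at hv
        exact hv.2.1
      have hclean₀ : Clean W₀ m₀ := by
        intro v hv
        rw [hW₀, Finset.mem_filter] at hv
        have := hv.2.2
        unfold mu at this
        omega
      have hsum := class_sum_eq_zero (H W₀ hW₀Int) hclean₀
      set M := h.support.filter (fun m => Em F W₀ m = Em F W₀ m₀) with hM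
      have hm₀M : m₀ ∈ M := by
        rw [hM]
        exact Finset.mem_filter.mpr ⟨hm₀, rfl⟩
      have hconn : ∀ m ∈ M, Relation.ReflTransGen (Move F) m m₀ := by
        intro m hmM
        rw [hM, Finset.mem_filter] at hmM
        obtain ⟨hms, hEm⟩ := hmM
        have hmu : ∀ v, mu m v = mu m₀ v := by
          intro v
          have hEv := DFunLike.congr_fun hEm (Sum.inr (Sum.inr v))
          rw [Em_apply_U, Em_apply_U] at hEv
          unfold mu
          exact hEv
        have hcs : ∀ v, compSum F W₀ m v = compSum F W₀ m₀ v := by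
          intro v
          have hEv := DFunLike.congr_fun hEm (Sum.inl (ccomp F W₀ v))
          rw [Em_apply_A, Em_apply_A] at hEv
          unfold compSum
          exact hEv
        have hInt : ∀ u, u ∉ W₀ → Internal F u → 0 < mu m u := by
          intro u hu hI
          rw [hW₀] at hu
          simp only [Finset.mem_filter, Finset.mem_univ, true_and, not_and] at hu
          have := hu hI
          rw [hmu u]
          omega
        exact conn_aux (dmeas m m₀) m m₀ le_rfl hmu hcs hInt
      set h' := h - ∑ m ∈ M, monomial m (h.coeff m) with hh'
      have hdiff : h - h' = ∑ m ∈ M, monomial m (h.coeff m) := by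
        rw [hh', sub_sub_cancel]
      have hdiffmem : h - h' ∈ edgeSpan K F := by
        rw [hdiff]
        have hzero : (monomial m₀ (∑ m ∈ M, h.coeff m) : MvPolynomial (α ⊕ α) K) = 0 := by
          rw [hsum, map_zero]
        have hrw : ∑ m ∈ M, monomial m (h.coeff m)
            = ∑ m ∈ M, (monomial m (h.coeff m) - monomial m₀ (h.coeff m)) := by
          rw [Finset.sum_sub_distrib]
          rw [← map_sum (monomial m₀) (fun m => h.coeff m) M, hzero, sub_zero]
        rw [hrw]
        apply Ideal.sum_mem
        intro m hmM
        have : monomial m (h.coeff m) - monomial m₀ (h.coeff m)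
            = C (h.coeff m) * (monomial m 1 - monomial m₀ 1) := by
          simp only [mul_sub, C_mul_monomial, mul_one]
        rw [this]
        exact Ideal.mul_mem_left _ _ (chain_diff_mem (hconn m hmM))
      have hcoeff' : ∀ m, h'.coeff m = if m ∈ M then 0 else h.coeff m := by
        intro m
        rw [hh', coeff_sub, MvPolynomial.coeff_sum]
        have : ∀ m' ∈ M, coeff m (monomial m' (h.coeff m'))
            = if m' = m then h.coeff m' else 0 := by
          intro m' _
          rw [coeff_monomial]
        rw [Finset.sum_congr rfl this, Finset.sum_ite_eq' M m (fun m' => h.coeff m')]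
        by_cases hmM : m ∈ M
        · rw [if_pos hmM, if_pos hmM]
          exact sub_self _
        · rw [if_neg hmM, if_neg hmM, sub_zero]
      have hsupp' : h'.support ⊆ h.support.erase m₀ := by
        intro m hm
        rw [MvPolynomial.mem_support_iff] at hm
        rw [hcoeff' m] at hm
        by_cases hmM : m ∈ M
        · rw [if_pos hmM] at hm
          exact absurd rfl hm
        · rw [if_neg hmM] at hm
          refine Finset.mem_erase.mpr ⟨?_, MvPolynomial.mem_support_iff.mpr hm⟩
          intro hEq
          subst hEq
          exact hmM hm₀M
      have hcard' : h'.support.card ≤ N := by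
        have h1 := Finset.card_le_card hsupp'
        have h2 := Finset.card_erase_of_mem hm₀
        have h3 : 0 < h.support.card := Finset.card_pos.mpr ⟨m₀, hm₀⟩
        omega
      have hH' : ∀ W : Finset α, (∀ v ∈ W, Internal F v) →
          aeval (img K F W) h' = 0 := by
        intro W hW
        have : h' = h - (h - h') := by ring
        rw [this, map_sub, H W hW, edgeSpan_ker hdiffmem, sub_zero]
      have hmem' := ih h' hcard' hH'
      have : h = h' + (h - h') := by ring
      rw [this]
      exact Ideal.add_mem _ hmem' hdiffmem

end Part5
-- PART 6: vanishing and non-vanishing of edge binomial images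
section Part6
variable {F : SimpleGraph α} {W : Finset α}

lemma phi_fb_zero_left {q : α} (hq : q ∈ W) (x : α) :
    aeval (img K F W) (fb K q x) = 0 ∧ aeval (img K F W) (fb K x q) = 0 := by
  constructor <;> simp [fb, img, hq]

lemma phi_fb_ne_zero {q c : α} (hq : q ∉ W) (hc : c ∉ W) (hqc : q ≠ c)
    (hiso : ∀ z, ¬ F.Adj c z) :
    aeval (img K F W) (fb K q c) ≠ 0 := by
  have hcc : ¬ (ccomp F W c = ccomp F W q) := by
    intro h
    obtain ⟨wk⟩ := SimpleGraph.ConnectedComponent.exact h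
    cases wk with
    | nil => exact hqc rfl
    | cons hadj q' => exact hiso _ hadj.1
  have himg : aeval (img K F W) (fb K q c)
      = monomial (Finsupp.single (Sum.inl (ccomp F W q)) 1
          + Finsupp.single (Sum.inr (Sum.inr q)) 1
          + (Finsupp.single (Sum.inr (Sum.inl (ccomp F W c))) 1
            + Finsupp.single (Sum.inr (Sum.inr c)) 1)) 1
        - monomial (Finsupp.single (Sum.inl (ccomp F W c)) 1
          + Finsupp.single (Sum.inr (Sum.inr c)) 1
          + (Finsupp.single (Sum.inr (Sum.inl (ccomp F W q))) 1
            + Finsupp.single (Sum.inr (Sum.inr q)) 1)) 1 := by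
    have hXX : ∀ (i j k l : Idx F W), (X i * X j * (X k * X l) : MvPolynomial (Idx F W) K)
        = monomial (Finsupp.single i 1 + Finsupp.single j 1
            + (Finsupp.single k 1 + Finsupp.single l 1)) 1 := by
      intro i j k l
      simp only [X, monomial_mul, one_mul, mul_one]
    simp only [fb, map_sub, map_mul, aeval_X, img, if_neg hq, if_neg hc]
    rw [hXX, hXX]
  rw [himg]
  intro hEq
  rw [sub_eq_zero] at hEq
  have hor := (MvPolynomial.monomial_eq_monomial_iff _ _ _ _).mp hEq
  rcases hor with ⟨ha, -⟩ | ⟨h1, -⟩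
  · have h1 := DFunLike.congr_fun ha (Sum.inl (ccomp F W q))
    simp only [Finsupp.add_apply, Finsupp.single_apply] at h1
    simp [hcc] at h1
  · exact one_ne_zero h1

end Part6
-- PART 7: enumeration of the edges of a tree
section Part7

/-- Enumerate the edges of a tree as (parent, child) pairs, grouped by parent,
children always fresh. -/
theorem exists_enum {n : ℕ} (G : SimpleGraph (Fin (n+1))) (hG : G.IsTree) :
    ∃ E : Fin n → Fin (n+1) × Fin (n+1),
      (∀ k, G.Adj (E k).1 (E k).2) ∧
      (∀ j k : Fin n, j < k → (E k).2 ≠ (E j).1 ∧ (E k).2 ≠ (E j).2) ∧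
      (∀ j l k : Fin n, j ≤ l → l ≤ k → (E j).1 = (E k).1 → (E l).1 = (E j).1) ∧
      (∀ a b, G.Adj a b → ∃ k, E k = (a, b) ∨ E k = (b, a)) := by
  classical
  set r : Fin (n+1) := 0 with hr
  have hEU := hG.existsUnique_path
  set P : ∀ v, G.Walk v r := fun v => (hEU v r).choose with hP
  have hPpath : ∀ v, (P v).IsPath := fun v => (hEU v r).choose_spec.1
  have hPu : ∀ (v) (q : G.Walk v r), q.IsPath → q = P v :=
    fun v q hq => (hEU v r).choose_spec.2 q hq
  set parent : Fin (n+1) → Fin (n+1) := fun v => (P v).getVert 1 with hparent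
  set dep : Fin (n+1) → ℕ := fun v => (P v).length with hdep
  -- structure of the path for v ≠ r
  have hrep : ∀ v, v ≠ r → ∃ (u : Fin (n+1)) (h : G.Adj v u) (q : G.Walk u r),
      P v = SimpleGraph.Walk.cons h q := by
    intro v hv
    obtain ⟨u, h, q, hq⟩ := SimpleGraph.Walk.exists_eq_cons_of_ne hv (P v)
    exact ⟨u, h, q, hq⟩
  have hchar : ∀ (v) (u) (h : G.Adj v u) (q : G.Walk u r),
      P v = SimpleGraph.Walk.cons h q → parent v = u ∧ q = P u ∧ dep v = dep u + 1 := by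
    intro v u h q hq
    have h1 : parent v = u := by
      rw [hparent]
      simp only []
      rw [hq, SimpleGraph.Walk.getVert_cons_succ, SimpleGraph.Walk.getVert_zero]
    have h2 : q = P u := by
      apply hPu
      have := hPpath v
      rw [hq] at this
      exact this.of_cons
    have h3 : dep v = dep u + 1 := by
      rw [hdep]
      simp only []
      rw [hq, SimpleGraph.Walk.length_cons, h2]
    exact ⟨h1, h2, h3⟩
  have hadj_parent : ∀ v, v ≠ r → G.Adj v (parent v) ∧ dep v = dep (parent v) + 1 := by
    intro v hv
    obtain ⟨u, h, q, hq⟩ := hrep v hv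
    obtain ⟨h1, h2, h3⟩ := hchar v u h q hq
    rw [h1]
    exact ⟨h, h3⟩
  -- dichotomy for adjacent vertices
  have hdich : ∀ a b, G.Adj a b →
      (a ≠ r ∧ parent a = b) ∨ (b ≠ r ∧ parent b = a) := by
    intro a b hab
    by_cases hbs : b ∈ (P a).support
    · left
      have har : a ≠ r := by
        intro hEq
        subst hEq
        have hnil : P r = SimpleGraph.Walk.nil := ((SimpleGraph.Walk.isPath_iff_eq_nil).mp
          (hPpath r))
        rw [hnil] at hbs
        simp only [SimpleGraph.Walk.support_nil, List.mem_cons, List.not_mem_nil,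
          or_false] at hbs
        exact hab.ne' hbs
      refine ⟨har, ?_⟩
      -- takeUntil gives the unique path from a to b, which must be the single edge
      have hq := (P a).take_spec hbs
      have htu : (P a).takeUntil b hbs = SimpleGraph.Walk.cons hab SimpleGraph.Walk.nil := by
        have h1 : ((P a).takeUntil b hbs).IsPath := (hPpath a).takeUntil hbs
        have h2 : (SimpleGraph.Walk.cons hab SimpleGraph.Walk.nil : G.Walk a b).IsPath := by
          simp [SimpleGraph.Walk.cons_isPath_iff, hab.ne]
        obtain ⟨p₀, hp₀, hp₀u⟩ := hEU a b
        rw [hp₀u _ h1, hp₀u _ h2]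
      rw [htu] at hq
      rw [SimpleGraph.Walk.cons_append, SimpleGraph.Walk.nil_append] at hq
      exact (hchar a b hab _ hq.symm).1
    · right
      have hbr : b ≠ r := by
        intro hEq
        subst hEq
        exact hbs ((P a).end_mem_support)
      refine ⟨hbr, ?_⟩
      have hcons : (SimpleGraph.Walk.cons hab.symm (P a) : G.Walk b r).IsPath := by
        rw [SimpleGraph.Walk.cons_isPath_iff]
        exact ⟨hPpath a, hbs⟩
      have := hPu b _ hcons
      exact (hchar b a hab.symm (P a) this.symm).1
  -- the key
  set key : Fin (n+1) → ℕ := fun v => (dep v * (n+1) + (parent v).val) * (n+1) + v.val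
    with hkey
  have hkey_div : ∀ v, key v / (n+1) = dep v * (n+1) + (parent v).val ∧
      key v % (n+1) = v.val := by
    intro v
    constructor
    · show ((dep v * (n+1) + (parent v).val) * (n+1) + v.val) / (n+1) = _
      rw [add_comm, Nat.add_mul_div_right _ _ (Nat.succ_pos n),
        Nat.div_eq_of_lt v.isLt, zero_add]
    · show ((dep v * (n+1) + (parent v).val) * (n+1) + v.val) % (n+1) = _
      rw [add_comm, Nat.add_mul_mod_self_right, Nat.mod_eq_of_lt v.isLt]
  have hkey_inj : Function.Injective key := by
    intro v w hEq
    have hv := hkey_div v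
    have hw := hkey_div w
    have h1 : v.val = w.val := by
      rw [← hv.2, ← hw.2, hEq]
    exact Fin.ext h1
  have hkey_dep_lt : ∀ v w, dep v < dep w → key v < key w := by
    intro v w h
    rw [hkey]
    simp only []
    have h1 : dep v * (n+1) + (parent v).val < dep w * (n+1) + (parent w).val := by
      have : (parent v).val < n+1 := (parent v).isLt
      have h2 : dep v * (n+1) + (n+1) ≤ dep w * (n+1) := by
        have : dep v + 1 ≤ dep w := h
        calc dep v * (n+1) + (n+1) = (dep v + 1) * (n+1) := by ring
        _ ≤ dep w * (n+1) := Nat.mul_le_mul_right _ this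
      omega
    have hv : v.val < n+1 := v.isLt
    have hw : w.val < n+1 := w.isLt
    calc (dep v * (n+1) + (parent v).val) * (n+1) + v.val
        < (dep v * (n+1) + (parent v).val) * (n+1) + (n+1) := by omega
      _ = (dep v * (n+1) + (parent v).val + 1) * (n+1) := by ring
      _ ≤ (dep w * (n+1) + (parent w).val) * (n+1) := Nat.mul_le_mul_right _ (by omega)
      _ ≤ (dep w * (n+1) + (parent w).val) * (n+1) + w.val := by omega
  have hkey_dep_le : ∀ v w, key v ≤ key w → dep v ≤ dep w := by
    intro v w h
    by_contra hcon
    push_neg at hcon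
    exact absurd (hkey_dep_lt w v hcon) (by omega)
  -- the sorted enumeration of non-root vertices
  set S : Finset (Fin (n+1)) := Finset.univ.filter (fun v => v ≠ r) with hS
  have hcardS : S.card = n := by
    rw [hS, Finset.filter_ne']
    rw [Finset.card_erase_of_mem (Finset.mem_univ r), Finset.card_univ, Fintype.card_fin]
    omega
  set KS : Finset ℕ := S.image key with hKS
  have hcardKS : KS.card = n := by
    rw [hKS, Finset.card_image_of_injective _ hkey_inj, hcardS]
  set ι := KS.orderIsoOfFin hcardKS with hι
  set κ : Fin n → ℕ := fun k => ((ι k : ℕ)) with hκ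
  set vOf : Fin n → Fin (n+1) := fun k => Function.invFun key (κ k) with hvOf
  have hκmem : ∀ k, κ k ∈ S.image key := by
    intro k
    have h0 : κ k ∈ KS := (ι k).2
    rwa [hKS] at h0
  have hvOf_spec : ∀ k, key (vOf k) = κ k ∧ vOf k ∈ S := by
    intro k
    obtain ⟨v, hvS, hkv⟩ := Finset.mem_image.mp (hκmem k)
    have h1 : key (Function.invFun key (κ k)) = κ k :=
      Function.invFun_eq ⟨v, hkv⟩
    have h1' : key (vOf k) = κ k := h1
    have h2 : vOf k = v := hkey_inj (h1'.trans hkv.symm)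
    refine ⟨h1', ?_⟩
    rw [h2]
    exact hvS
  have hvOf_ne_r : ∀ k, vOf k ≠ r := by
    intro k
    have := (hvOf_spec k).2
    rw [hS, Finset.mem_filter] at this
    exact this.2
  have hvOf_mono : ∀ j k : Fin n, j < k → key (vOf j) < key (vOf k) := by
    intro j k hjk
    rw [(hvOf_spec j).1, (hvOf_spec k).1]
    have := ι.strictMono hjk
    exact_mod_cast this
  have hvOf_mono_le : ∀ j k : Fin n, j ≤ k → key (vOf j) ≤ key (vOf k) := by
    intro j k hjk
    rcases eq_or_lt_of_le hjk with rfl | h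
    · exact le_refl _
    · exact le_of_lt (hvOf_mono j k h)
  have hvOf_surj : ∀ v, v ≠ r → ∃ k, vOf k = v := by
    intro v hv
    have hvS : v ∈ S := by rw [hS, Finset.mem_filter]; exact ⟨Finset.mem_univ v, hv⟩
    have hkv : key v ∈ KS := by rw [hKS]; exact Finset.mem_image_of_mem key hvS
    obtain ⟨k, hk⟩ := ι.surjective ⟨key v, hkv⟩
    have hκk : κ k = key v := by
      show ((ι k : ℕ)) = key v
      rw [hk]
    refine ⟨k, hkey_inj ?_⟩
    rw [(hvOf_spec k).1, hκk]
  -- the enumeration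
  refine ⟨fun k => (parent (vOf k), vOf k), ?_, ?_, ?_, ?_⟩
  · intro k
    exact ((hadj_parent (vOf k) (hvOf_ne_r k)).1).symm
  · intro j k hjk
    constructor
    · intro hEq
      dsimp only at hEq
      have h1 := hadj_parent (vOf j) (hvOf_ne_r j)
      have h2 : dep (vOf k) < dep (vOf j) := by rw [hEq]; omega
      have := hkey_dep_lt _ _ h2
      have := hvOf_mono j k hjk
      omega
    · intro hEq
      dsimp only at hEq
      have := hvOf_mono j k hjk
      rw [hEq] at this
      omega
  · intro j l k hjl hlk hEq
    dsimp only at hEq ⊢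
    have hd_j := (hadj_parent (vOf j) (hvOf_ne_r j)).2
    have hd_k := (hadj_parent (vOf k) (hvOf_ne_r k)).2
    have hd_l := (hadj_parent (vOf l) (hvOf_ne_r l)).2
    have hk1 := hvOf_mono_le j l hjl
    have hk2 := hvOf_mono_le l k hlk
    -- depths agree
    have hdep_jk : dep (vOf j) = dep (vOf k) := by rw [hd_j, hd_k, hEq]
    have hdep_jl : dep (vOf j) = dep (vOf l) := by
      have g1 := hkey_dep_le _ _ hk1
      have g2 := hkey_dep_le _ _ hk2
      omega
    -- compare middle digits
    have hdj := hkey_div (vOf j)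
    have hdl := hkey_div (vOf l)
    have hdk := hkey_div (vOf k)
    have e1 : key (vOf j) / (n+1) ≤ key (vOf l) / (n+1) := Nat.div_le_div_right hk1
    have e2 : key (vOf l) / (n+1) ≤ key (vOf k) / (n+1) := Nat.div_le_div_right hk2
    rw [hdj.1, hdl.1] at e1
    rw [hdl.1, hdk.1] at e2
    rw [← hdep_jl] at e1 e2
    rw [← hdep_jk] at e2
    have hval : (parent (vOf j)).val = (parent (vOf k)).val := by rw [hEq]
    have hb1 : (parent (vOf l)).val < n + 1 := (parent (vOf l)).isLt
    have hb2 : (parent (vOf j)).val < n + 1 := (parent (vOf j)).isLt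
    generalize hT : dep (vOf j) * (n+1) = T at e1 e2
    exact Fin.ext (by omega)
  · intro a b hab
    rcases hdich a b hab with ⟨har, hpa⟩ | ⟨hbr, hpb⟩
    · obtain ⟨k, hk⟩ := hvOf_surj a har
      refine ⟨k, Or.inr ?_⟩
      dsimp only
      rw [hk, hpa]
    · obtain ⟨k, hk⟩ := hvOf_surj b hbr
      refine ⟨k, Or.inl ?_⟩
      dsimp only
      rw [hk, hpb]

end Part7

end
end PSeqAux

open MvPolynomial PSeqAux in
/-- Let `G` be a tree on the vertex set `[n+1]` (so with `n` edges).
Then the edge binomials `f_{ij} = x_i y_j - x_j y_i` of `G` can be ordered as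
`d_1, …, d_n` so that they form a `p`-sequence in
`S = K[x_1,…,x_{n+1},y_1,…,y_{n+1}]`: they minimally generate the binomial edge ideal
`J_G` and `(d_0,…,d_i) : (d_{i1} d_{i2}) = (d_0,…,d_i) : d_{i1}` for all
`0 ≤ i ≤ n-1` and `i < i1 ≤ i2 ≤ n` (0-based below). -/
theorem binomialEdgeIdeal_tree_pSequence {K : Type*} [Field K] {n : ℕ}
    (G : SimpleGraph (Fin (n + 1))) (hG : G.IsTree) :
    ∃ d : Fin n → MvPolynomial (Fin (n + 1) ⊕ Fin (n + 1)) K,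
      (Set.range d = {p | ∃ i j : Fin (n + 1), i < j ∧ G.Adj i j ∧
        p = X (Sum.inl i) * X (Sum.inr j) - X (Sum.inl j) * X (Sum.inr i)}) ∧
      (Ideal.span (Set.range d) =
        Ideal.span {p | ∃ i j : Fin (n + 1), i < j ∧ G.Adj i j ∧
          p = X (Sum.inl i) * X (Sum.inr j) - X (Sum.inl j) * X (Sum.inr i)}) ∧
      (∀ k : Fin n, d k ∉ Ideal.span (d '' {j | j ≠ k})) ∧
      (∀ i : ℕ, i < n → ∀ i1 i2 : Fin n, i ≤ i1.val → i1 ≤ i2 →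
        (Ideal.span (d '' {j | j.val < i})).colon (Ideal.span {d i1 * d i2}) =
        (Ideal.span (d '' {j | j.val < i})).colon (Ideal.span {d i1})) := by
  classical
  obtain ⟨E, hadjE, hfresh, hblock, hcover⟩ := exists_enum G hG
  have hne : ∀ k, (E k).1 ≠ (E k).2 := fun k => (hadjE k).ne
  set d : Fin n → MvPolynomial (Fin (n + 1) ⊕ Fin (n + 1)) K :=
    fun k => if (E k).1 < (E k).2 then fb K (E k).1 (E k).2 else fb K (E k).2 (E k).1
    with hd
  have hdor : ∀ k, d k = fb K (E k).1 (E k).2 ∨ d k = - fb K (E k).1 (E k).2 := by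
    intro k
    rw [hd]
    dsimp only
    by_cases h : (E k).1 < (E k).2
    · rw [if_pos h]; left; rfl
    · rw [if_neg h]; right; exact fb_swap _ _
  -- edge sets of different indices differ
  have hdisj : ∀ j k : Fin n, j ≠ k →
      ∃ v, (v = (E j).1 ∨ v = (E j).2) ∧ v ≠ (E k).1 ∧ v ≠ (E k).2 := by
    intro j k hjk
    by_contra hcon
    push_neg at hcon
    have h1 := hcon (E j).1 (Or.inl rfl)
    have h2 := hcon (E j).2 (Or.inr rfl)
    -- then the two edges are equal as unordered pairs
    have hpair : ((E j).1 = (E k).1 ∧ (E j).2 = (E k).2) ∨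
        ((E j).1 = (E k).2 ∧ (E j).2 = (E k).1) := by
      by_cases ha : (E j).1 = (E k).1
      · by_cases hb : (E j).2 = (E k).1
        · exact absurd (ha.trans hb.symm) (hne j)
        · exact Or.inl ⟨ha, h2 hb⟩
      · have ha2 := h1 ha
        by_cases hb : (E j).2 = (E k).1
        · exact Or.inr ⟨ha2, hb⟩
        · exact absurd (ha2.trans (h2 hb).symm) (hne j)
    rcases lt_trichotomy j k with h | h | h
    · have := hfresh j k h
      rcases hpair with ⟨ha, hb⟩ | ⟨ha, hb⟩
      · exact this.2 hb.symm
      · exact this.1 ha.symm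
    · exact hjk h
    · have := hfresh k j h
      rcases hpair with ⟨ha, hb⟩ | ⟨ha, hb⟩
      · exact this.2 hb
      · exact this.1 hb
  -- the range identity
  have hrange : Set.range d = {p | ∃ i j : Fin (n + 1), i < j ∧ G.Adj i j ∧
      p = X (Sum.inl i) * X (Sum.inr j) - X (Sum.inl j) * X (Sum.inr i)} := by
    ext p
    constructor
    · rintro ⟨k, rfl⟩
      rw [hd]
      dsimp only
      by_cases h : (E k).1 < (E k).2
      · rw [if_pos h]
        exact ⟨(E k).1, (E k).2, h, hadjE k, rfl⟩
      · have hlt : (E k).2 < (E k).1 := lt_of_le_of_ne (not_lt.mp h) (Ne.symm (hne k))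
        rw [if_neg h]
        exact ⟨(E k).2, (E k).1, hlt, (hadjE k).symm, rfl⟩
    · rintro ⟨a, b, hab, hadj, rfl⟩
      obtain ⟨k, hk | hk⟩ := hcover a b hadj
      · refine ⟨k, ?_⟩
        rw [hd]
        dsimp only
        rw [hk]
        dsimp only
        rw [if_pos hab]
        rfl
      · refine ⟨k, ?_⟩
        rw [hd]
        dsimp only
        rw [hk]
        dsimp only
        rw [if_neg (lt_asymm hab)]
        rfl
  refine ⟨d, hrange, by rw [hrange], ?_, ?_⟩
  · -- minimality
    intro k hkmem
    set g : (Fin (n+1) ⊕ Fin (n+1)) → MvPolynomial (Fin (n + 1) ⊕ Fin (n + 1)) K :=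
      fun z => if Sum.elim id id z = (E k).1 ∨ Sum.elim id id z = (E k).2 then X z else 0
      with hg
    have hg_eq : ∀ u : Fin (n+1), (u = (E k).1 ∨ u = (E k).2) →
        g (Sum.inl u) = X (Sum.inl u) ∧ g (Sum.inr u) = X (Sum.inr u) := by
      intro u hu
      rw [hg]
      constructor <;> · dsimp only; rw [if_pos (by simpa using hu)]
    have hg_ne : ∀ u : Fin (n+1), u ≠ (E k).1 → u ≠ (E k).2 →
        g (Sum.inl u) = 0 ∧ g (Sum.inr u) = 0 := by
      intro u h1 h2
      rw [hg]
      constructor <;> · dsimp only; rw [if_neg (by simpa using not_or.mpr ⟨h1, h2⟩)]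
    have hgen : ∀ q ∈ d '' {j | j ≠ k}, aeval g q = 0 := by
      rintro q ⟨j, hj, rfl⟩
      obtain ⟨v, hv, hv1, hv2⟩ := hdisj j k hj
      have hzero : aeval g (fb K (E j).1 (E j).2) = 0 := by
        rw [fb, map_sub, map_mul, map_mul, aeval_X, aeval_X, aeval_X, aeval_X]
        rcases hv with rfl | rfl
        · rw [(hg_ne _ hv1 hv2).1, (hg_ne _ hv1 hv2).2, zero_mul, mul_zero, sub_zero]
        · rw [(hg_ne _ hv1 hv2).1, (hg_ne _ hv1 hv2).2, mul_zero, zero_mul, sub_zero]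
      rcases hdor j with hdj | hdj
      · rw [hdj]; exact hzero
      · rw [hdj, map_neg, hzero, neg_zero]
    have hker : d k ∈ RingHom.ker ((aeval g :
        MvPolynomial (Fin (n + 1) ⊕ Fin (n + 1)) K →ₐ[K] _)).toRingHom := by
      apply Ideal.span_le.mpr _ hkmem
      intro q hq
      exact hgen q hq
    have hself : aeval g (fb K (E k).1 (E k).2) = fb K (E k).1 (E k).2 := by
      rw [fb, map_sub, map_mul, map_mul, aeval_X, aeval_X, aeval_X, aeval_X]
      rw [(hg_eq _ (Or.inl rfl)).1, (hg_eq _ (Or.inr rfl)).2,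
        (hg_eq _ (Or.inr rfl)).1, (hg_eq _ (Or.inl rfl)).2]
    have hne0 : aeval g (d k) ≠ 0 := by
      rcases hdor k with hdk | hdk
      · rw [hdk, hself]
        exact fb_ne_zero (hne k)
      · rw [hdk, map_neg, hself, neg_ne_zero]
        exact fb_ne_zero (hne k)
    exact hne0 hker
  · -- the colon condition
    intro i hi i1 i2 hii1 hi12
    set Fi : SimpleGraph (Fin (n+1)) :=
      { Adj := fun a b => ∃ j : Fin n, j.val < i ∧
          ((E j).1 = a ∧ (E j).2 = b ∨ (E j).1 = b ∧ (E j).2 = a)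
        symm := by
          constructor; rintro a b ⟨j, hj, h⟩
          exact ⟨j, hj, h.symm⟩
        loopless := by
          constructor; rintro a ⟨j, hj, h⟩
          rcases h with ⟨h1, h2⟩ | ⟨h1, h2⟩ <;> exact hne j (h1.trans h2.symm) } with hFi
    have hFiAdj : ∀ a b, Fi.Adj a b ↔ ∃ j : Fin n, j.val < i ∧
        ((E j).1 = a ∧ (E j).2 = b ∨ (E j).1 = b ∧ (E j).2 = a) := by
      intro a b
      rw [hFi]
    have hJ : Ideal.span (d '' {j | j.val < i}) = edgeSpan K Fi := by
      apply le_antisymm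
      · rw [Ideal.span_le]
        rintro q ⟨j, hjlt, rfl⟩
        rcases hdor j with hdj | hdj
        · rw [hdj]
          exact Ideal.subset_span ⟨(E j).1, (E j).2,
            (hFiAdj _ _).mpr ⟨j, hjlt, Or.inl ⟨rfl, rfl⟩⟩, rfl⟩
        · rw [hdj]
          exact neg_mem (Ideal.subset_span ⟨(E j).1, (E j).2,
            (hFiAdj _ _).mpr ⟨j, hjlt, Or.inl ⟨rfl, rfl⟩⟩, rfl⟩)
      · rw [edgeSpan, Ideal.span_le]
        rintro q ⟨a, b, hab, rfl⟩
        rw [hFiAdj] at hab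
        obtain ⟨j, hjlt, hcase⟩ := hab
        have hmem : d j ∈ Ideal.span (d '' {j | j.val < i}) :=
          Ideal.subset_span ⟨j, hjlt, rfl⟩
        have hfb : fb K a b = d j ∨ fb K a b = - d j := by
          rcases hcase with ⟨h1, h2⟩ | ⟨h1, h2⟩ <;> rcases hdor j with hdj | hdj
          · rw [hdj, h1, h2]; left; rfl
          · rw [hdj, h1, h2, neg_neg]; right; rfl
          · rw [hdj, h1, h2]
            right
            rw [fb_swap]
          · rw [hdj, h1, h2, neg_neg]
            left
            rw [fb_swap]
        rcases hfb with h | h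
        · rw [h]; exact hmem
        · rw [h]; exact neg_mem hmem
    -- φ-vanishing transfer for d
    have hphi_d : ∀ (W : Finset (Fin (n+1))) (k : Fin n),
        aeval (img K Fi W) (d k) = 0 ↔ aeval (img K Fi W) (fb K (E k).1 (E k).2) = 0 := by
      intro W k
      rcases hdor k with hdk | hdk
      · rw [hdk]
      · rw [hdk, map_neg, neg_eq_zero]
    ext r
    rw [Ideal.mem_colon_span_singleton, Ideal.mem_colon_span_singleton]
    constructor
    · intro hr
      rw [hJ] at hr ⊢
      apply main_ker Fi
      intro W hW
      have h0 : aeval (img K Fi W) (r * (d i1 * d i2)) = 0 := edgeSpan_ker hr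
      rw [map_mul, map_mul] at h0
      by_cases hz : aeval (img K Fi W) (d i2) = 0
      · -- the hard case : parent of `i2` is deleted, hence so is the parent of `i1`
        have hciso : ∀ z, ¬ Fi.Adj (E i2).2 z := by
          intro z hadj
          rw [hFiAdj] at hadj
          obtain ⟨j, hjlt, hc⟩ := hadj
          have hji2 : j < i2 := by
            rw [Fin.lt_def]
            have := hi12
            rw [Fin.le_def] at this
            omega
          have hfr := hfresh j i2 hji2
          rcases hc with ⟨h1, h2⟩ | ⟨h1, h2⟩
          · exact hfr.1 h1.symm
          · exact hfr.2 h2.symm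
        have hcnotint : ¬ Internal Fi (E i2).2 := by
          rintro ⟨a, b, hab, h1, h2⟩
          exact hciso a h1
        have hcW : (E i2).2 ∉ W := fun h => hcnotint (hW _ h)
        have hqW : (E i2).1 ∈ W := by
          by_contra hqW
          rw [hphi_d] at hz
          exact phi_fb_ne_zero hqW hcW (hne i2) hciso hz
        have hqint := hW _ hqW
        obtain ⟨l, hllt, hlq⟩ : ∃ l : Fin n, l.val < i ∧ (E l).1 = (E i2).1 := by
          obtain ⟨a, b, hab, ha, hb⟩ := hqint
          rw [hFiAdj] at ha hb
          obtain ⟨j1, hj1, hc1⟩ := ha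
          obtain ⟨j2, hj2, hc2⟩ := hb
          rcases hc1 with ⟨h1, h2⟩ | ⟨h1, h2⟩
          · exact ⟨j1, hj1, h1⟩
          · rcases hc2 with ⟨g1, g2⟩ | ⟨g1, g2⟩
            · exact ⟨j2, hj2, g1⟩
            · -- both j1 and j2 have the vertex as a child : impossible
              exfalso
              have hj12 : j1 ≠ j2 := by
                intro hEq
                subst hEq
                exact hab (h1.symm.trans g1)
              rcases lt_or_gt_of_ne hj12 with h | h
              · exact (hfresh j1 j2 h).2 (g2.trans h2.symm)
              · exact (hfresh j2 j1 h).2 (h2.trans g2.symm)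
        have hli1 : l ≤ i1 := by
          rw [Fin.le_def]
          omega
        have hi1q : (E i1).1 = (E i2).1 := by
          have := hblock l i1 i2 hli1 hi12 (by rw [hlq])
          rw [this, hlq]
        have hzero1 : aeval (img K Fi W) (d i1) = 0 := by
          rw [hphi_d]
          rw [hi1q]
          exact (phi_fb_zero_left hqW _).1
        rw [map_mul, hzero1, mul_zero]
      · have hdom : (aeval (img K Fi W) (r * d i1)) * aeval (img K Fi W) (d i2) = 0 := by
          rw [map_mul, mul_assoc]
          exact h0
        rcases mul_eq_zero.mp hdom with h | h
        · exact h
        · exact absurd h hz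
    · intro hr
      rw [← mul_assoc]
      exact Ideal.mul_mem_right _ _ hr
end

section
/- Let A be a commutative Noetherian ring and z_1,…,z_n ∈ A an unconditional d-sequence (i.e., a d-sequence in every order). Then z_1,…,z_n is a p-sequence: (z_1,…,z_i) : (z_{i1} z_{i2}) = (z_1,…,z_i) : z_{i1} for all 0 ≤ i ≤ n−1 and i < i1 ≤ i2 ≤ n. -/
private lemma span_image_perm {A : Type*} [CommRing A] {n : ℕ} (z : Fin n → A)
    (σ : Equiv.Perm (Fin n)) (i : ℕ) (ipos : Fin n) (hip : ipos.val = i)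
    (hfix : ∀ k : Fin n, k.val < i → σ k = k) :
    Ideal.span ((z ∘ σ) '' {k | k < ipos}) = Ideal.span (z '' {j | j.val < i}) := by
  have hset : σ '' {k : Fin n | k < ipos} = {j : Fin n | j.val < i} := by
    ext x
    simp only [Set.mem_image, Set.mem_setOf_eq, Fin.lt_def, hip]
    constructor
    · rintro ⟨k, hk, rfl⟩
      rwa [hfix k hk]
    · intro hx
      exact ⟨x, hx, hfix x hx⟩
  rw [Set.image_comp, hset]

/-- In a commutative Noetherian ring, an unconditional `d`-sequence
(a `d`-sequence in every order) is a `p`-sequence. -/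
theorem unconditional_dSequence_is_pSequence {A : Type*} [CommRing A]
    [IsNoetherianRing A] {n : ℕ} (z : Fin n → A)
    (hd : ∀ σ : Equiv.Perm (Fin n), IsDSeq (z ∘ σ)) :
    (∀ k : Fin n, z k ∉ Ideal.span (z '' {j | j ≠ k})) ∧
    (∀ i : ℕ, i < n → ∀ i1 i2 : Fin n, i ≤ i1.val → i1 ≤ i2 →
      (Ideal.span (z '' {j | j.val < i})).colon (Ideal.span {z i1 * z i2}) =
      (Ideal.span (z '' {j | j.val < i})).colon (Ideal.span {z i1})) := by
  constructor
  · simpa using (hd 1).1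
  · intro i hi i1 i2 h1 h2
    set ipos : Fin n := ⟨i, hi⟩ with hipos
    have hiple : ipos ≤ i1 := Fin.le_def.mpr h1
    rcases eq_or_lt_of_le h2 with rfl | hlt
    · -- square case : i1 = i2
      set σ := Equiv.swap ipos i1 with hσ
      have hfix : ∀ k : Fin n, k.val < i → σ k = k := by
        intro k hk
        apply Equiv.swap_apply_of_ne_of_ne
        · exact Fin.ne_of_lt (Fin.lt_def.mpr hk)
        · exact Fin.ne_of_lt (Fin.lt_def.mpr (lt_of_lt_of_le hk h1))
      have key := (hd σ).2 ipos ipos le_rfl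
      rw [span_image_perm z σ i ipos rfl hfix] at key
      simpa [hσ, Equiv.swap_apply_left] using key
    · rcases eq_or_lt_of_le h1 with h1e | h1lt
      · -- i1.val = i, i1 < i2
        have hipos1 : ipos = i1 := Fin.ext h1e
        set σ := Equiv.swap ipos i2 with hσ
        have hfix : ∀ k : Fin n, k.val < i → σ k = k := by
          intro k hk
          apply Equiv.swap_apply_of_ne_of_ne
          · exact Fin.ne_of_lt (Fin.lt_def.mpr hk)
          · exact Fin.ne_of_lt (Fin.lt_def.mpr
              (lt_of_lt_of_le hk (le_of_lt (lt_of_le_of_lt h1 (Fin.lt_def.mp hlt)))))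
        have hle : ipos ≤ i2 := le_of_lt (hipos1 ▸ hlt)
        have key := (hd σ).2 ipos i2 hle
        rw [span_image_perm z σ i ipos rfl hfix] at key
        have e1 : σ ipos = i2 := Equiv.swap_apply_left _ _
        have e2 : σ i2 = i1 := by rw [hσ, Equiv.swap_apply_right, hipos1]
        simp only [Function.comp_apply, e1, e2] at key
        rwa [mul_comm] at key
      · -- i < i1.val, i1 < i2
        have hlt1 : ipos < i1 := Fin.lt_def.mpr h1lt
        have hi1n : i + 1 < n := lt_of_le_of_lt h1lt i1.isLt
        set ipos1 : Fin n := ⟨i + 1, hi1n⟩ with hipos1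
        set σ := Equiv.swap ipos i2 * Equiv.swap ipos1 i1 with hσ
        have hne_pi1 : ipos ≠ ipos1 := Fin.ne_of_lt (Fin.lt_def.mpr (Nat.lt_succ_self i))
        have hne_pi2 : ipos ≠ i1 := Fin.ne_of_lt hlt1
        have hne_i12 : i1 ≠ i2 := Fin.ne_of_lt hlt
        have hne_i1p : i1 ≠ ipos := hne_pi2.symm
        have hfix : ∀ k : Fin n, k.val < i → σ k = k := by
          intro k hk
          have h2lt : (i2 : Fin n).val > i := lt_trans h1lt (Fin.lt_def.mp hlt)
          have hinner : Equiv.swap ipos1 i1 k = k :=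
            Equiv.swap_apply_of_ne_of_ne
              (Fin.ne_of_lt (Fin.lt_def.mpr (by simp [hipos1]; omega)))
              (Fin.ne_of_lt (Fin.lt_def.mpr (by omega)))
          rw [hσ, Equiv.Perm.mul_apply, hinner]
          exact Equiv.swap_apply_of_ne_of_ne
            (Fin.ne_of_lt (Fin.lt_def.mpr hk))
            (Fin.ne_of_lt (Fin.lt_def.mpr (by omega)))
        have hle : ipos ≤ ipos1 := Fin.le_def.mpr (Nat.le_succ i)
        have key := (hd σ).2 ipos ipos1 hle
        rw [span_image_perm z σ i ipos rfl hfix] at key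
        have e1 : σ ipos = i2 := by
          rw [hσ, Equiv.Perm.mul_apply,
            Equiv.swap_apply_of_ne_of_ne hne_pi1 hne_pi2, Equiv.swap_apply_left]
        have e2 : σ ipos1 = i1 := by
          rw [hσ, Equiv.Perm.mul_apply, Equiv.swap_apply_left,
            Equiv.swap_apply_of_ne_of_ne hne_i1p hne_i12]
        simp only [Function.comp_apply, e1, e2] at key
        rwa [mul_comm] at key
end

section
/- Let A be an integral domain and suppose z_1,…,z_n ∈ A is a p-sequence such that each partial ideal (z_1,…,z_i) is prime (or zero) for all 1 ≤ i ≤ n. Then the ideal I = (z_1,…,z_n) is of linear type: every polynomial relation on z_1,…,z_n is generated by linear relations. -/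
open MvPolynomial

namespace PSeqLinearType

universe u

variable {A : Type u} [CommRing A]

/-- The set of linear relations on `z`. -/
def relSet {n : ℕ} (z : Fin n → A) : Set (MvPolynomial (Fin n) A) :=
  {L : MvPolynomial (Fin n) A |
    ∃ a : Fin n → A, L = ∑ i, C (a i) * X i ∧ ∑ i, a i * z i = 0}

lemma eval_eq_zero_of_mem_span {n : ℕ} {z : Fin n → A} {F : MvPolynomial (Fin n) A}
    (hF : F ∈ Ideal.span (relSet z)) : eval z F = 0 := by
  have h : Ideal.span (relSet z) ≤ RingHom.ker (eval z) := by
    rw [Ideal.span_le]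
    rintro L ⟨a, rfl, ha⟩
    simp only [SetLike.mem_coe, RingHom.mem_ker, map_sum, map_mul, eval_C, eval_X]
    exact ha
  exact h hF

lemma relSet_isHomogeneous {n : ℕ} {z : Fin n → A} {L : MvPolynomial (Fin n) A}
    (hL : L ∈ relSet z) : L.IsHomogeneous 1 := by
  obtain ⟨a, rfl, -⟩ := hL
  exact IsHomogeneous.sum _ _ _ fun i _ => isHomogeneous_C_mul_X _ _

lemma koszul_mem {n : ℕ} (z : Fin n → A) (i j : Fin n) :
    C (z i) * X j - C (z j) * X i ∈ relSet z := by
  classical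
  refine ⟨fun k => (if k = j then z i else 0) - (if k = i then z j else 0), ?_, ?_⟩
  · have h : ∀ k : Fin n,
        C ((if k = j then z i else 0) - (if k = i then z j else 0)) * X k
          = (if k = j then C (z i) * X j else 0) - (if k = i then C (z j) * X i else 0) := by
      intro k
      split_ifs with h1 h2 h2 <;> subst_vars <;> simp
    rw [Finset.sum_congr rfl fun k _ => h k, Finset.sum_sub_distrib,
      Finset.sum_ite_eq' Finset.univ j, Finset.sum_ite_eq' Finset.univ i]
    simp
  · have h : ∀ k : Fin n,
        ((if k = j then z i else 0) - (if k = i then z j else 0)) * z k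
          = (if k = j then z i * z j else 0) - (if k = i then z j * z i else 0) := by
      intro k
      split_ifs with h1 h2 h2 <;> subst_vars <;> simp [mul_comm]
    rw [Finset.sum_congr rfl fun k _ => h k, Finset.sum_sub_distrib,
      Finset.sum_ite_eq' Finset.univ j, Finset.sum_ite_eq' Finset.univ i]
    simp [mul_comm]

section DegreeLemmas

lemma degree_eq_sum_univ {N : ℕ} (m : Fin N →₀ ℕ) : m.degree = ∑ i, m i :=
  Finset.sum_subset (Finset.subset_univ _)
    (fun _ _ hi => Finsupp.notMem_support_iff.mp hi)

lemma degree_of_coeff_ne_zero {N d : ℕ} {F : MvPolynomial (Fin N) A} (hF : F.IsHomogeneous d)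
    {m : Fin N →₀ ℕ} (hm : coeff m F ≠ 0) : m.degree = d := by
  rw [Finsupp.degree_eq_weight_one]
  exact hF hm

lemma degree_of_mem_support {N d : ℕ} {F : MvPolynomial (Fin N) A} (hF : F.IsHomogeneous d)
    {m : Fin N →₀ ℕ} (hm : m ∈ F.support) : m.degree = d :=
  degree_of_coeff_ne_zero hF (MvPolynomial.mem_support_iff.mp hm)

lemma single_add_sub {N : ℕ} {m : Fin N →₀ ℕ} {j : Fin N} (h : m j ≠ 0) :
    Finsupp.single j 1 + (m - Finsupp.single j 1) = m := by
  ext k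
  rcases eq_or_ne k j with rfl | hk
  · simp only [Finsupp.add_apply, Finsupp.tsub_apply, Finsupp.single_eq_same]
    omega
  · simp only [Finsupp.add_apply, Finsupp.tsub_apply,
      Finsupp.single_eq_of_ne' (Ne.symm hk)]
    omega

lemma degree_sub_single {N : ℕ} {m : Fin N →₀ ℕ} {j : Fin N} (h : m j ≠ 0) :
    (m - Finsupp.single j 1).degree = m.degree - 1 := by
  have h2 := single_add_sub h
  have h3 : m.degree = 1 + (m - Finsupp.single j 1).degree := by
    conv_lhs => rw [← h2]
    rw [degree_eq_sum_univ, degree_eq_sum_univ]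
    simp only [Finsupp.add_apply]
    rw [Finset.sum_add_distrib]
    congr 1
    simp [Finsupp.single_apply]
  omega

lemma degree_mapDomain {N : ℕ} (u : Fin N →₀ ℕ) :
    (Finsupp.mapDomain Fin.succ u).degree = u.degree := by
  rw [degree_eq_sum_univ, degree_eq_sum_univ, Fin.sum_univ_succ]
  rw [Finsupp.mapDomain_notin_range _ _ (by rintro ⟨i, hi⟩; exact Fin.succ_ne_zero i hi)]
  simp [Finsupp.mapDomain_apply (Fin.succ_injective _)]

lemma degree_one_structure {N : ℕ} {m : Fin N →₀ ℕ} (h : m.degree = 1) :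
    ∃ i, m = Finsupp.single i 1 := by
  obtain ⟨i, hi⟩ : m.support.Nonempty := by
    rw [Finsupp.support_nonempty_iff]
    rintro rfl
    simp at h
  have h2 : 1 ≤ m i := Nat.one_le_iff_ne_zero.mpr (Finsupp.mem_support_iff.mp hi)
  have h4 : m i + ∑ j ∈ m.support.erase i, m j = 1 := by
    rw [Finset.add_sum_erase _ _ hi]; exact h
  have h5 : ∀ j ∈ m.support.erase i, m j = 0 := by
    intro j hj
    have := Finset.sum_eq_zero_iff.mp (by omega : ∑ j ∈ m.support.erase i, m j = 0) j hj
    exact this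
  refine ⟨i, Finsupp.ext fun k => ?_⟩
  rcases eq_or_ne k i with rfl | hk
  · rw [Finsupp.single_eq_same]; omega
  · rw [Finsupp.single_eq_of_ne' (Ne.symm hk)]
    by_contra hmk
    exact hmk (h5 k (Finset.mem_erase.mpr ⟨hk, Finsupp.mem_support_iff.mpr hmk⟩))

end DegreeLemmas

lemma homog_deg_one_eq {N : ℕ} {F : MvPolynomial (Fin N) A} (h : F.IsHomogeneous 1) :
    F = ∑ i, C (coeff (Finsupp.single i 1) F) * X i := by
  classical
  have key : ∀ m ∈ F.support, monomial m (coeff m F)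
      = ∑ i, (if m = Finsupp.single i 1 then monomial m (coeff m F) else 0) := by
    intro m hm
    obtain ⟨i, rfl⟩ := degree_one_structure (degree_of_mem_support h hm)
    rw [Finset.sum_eq_single i]
    · simp
    · intro j _ hj
      exact if_neg fun hc => hj ((Finsupp.single_left_inj one_ne_zero).mp hc).symm
    · intro hin; exact absurd (Finset.mem_univ i) hin
  conv_lhs => rw [← support_sum_monomial_coeff F]
  rw [Finset.sum_congr rfl key, Finset.sum_comm]
  refine Finset.sum_congr rfl fun i _ => ?_
  rw [Finset.sum_ite_eq' F.support (Finsupp.single i 1) (fun x => monomial x (coeff x F))]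
  split_ifs with hmem
  · rw [X, C_mul_monomial, mul_one]
  · rw [MvPolynomial.notMem_support_iff.mp hmem]
    simp

section Phi

variable (z0 : A) (n : ℕ)

/-- The reduction map `A[X₀,…,Xₙ] → (A/(z₀))[X₁,…,Xₙ]`, sending `X₀ ↦ 0`, `X_{i+1} ↦ X_i`. -/
noncomputable def phi :
    MvPolynomial (Fin (n+1)) A →+* MvPolynomial (Fin n) (A ⧸ Ideal.span {z0}) :=
  eval₂Hom ((C : (A ⧸ Ideal.span {z0}) →+* MvPolynomial (Fin n) (A ⧸ Ideal.span {z0})).comp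
    (Ideal.Quotient.mk (Ideal.span {z0})))
    (fun j => Fin.cases 0 (fun i => X i) j)

@[simp] lemma phi_C (a : A) : phi z0 n (C a) = C (Ideal.Quotient.mk (Ideal.span {z0}) a) := by
  simp [phi]

@[simp] lemma phi_X_zero : phi z0 n (X 0) = 0 := by
  simp only [phi, eval₂Hom_X', Fin.cases_zero]

@[simp] lemma phi_X_succ (i : Fin n) : phi z0 n (X i.succ) = X i := by
  simp only [phi, eval₂Hom_X', Fin.cases_succ]

lemma phi_rename (Q : MvPolynomial (Fin n) A) :
    phi z0 n (rename Fin.succ Q) = MvPolynomial.map (Ideal.Quotient.mk (Ideal.span {z0})) Q := by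
  induction Q using MvPolynomial.induction_on with
  | C a => simp [rename_C]
  | add p q hp hq => simp only [map_add, hp, hq]
  | mul_X p i hp => simp only [map_mul, rename_X, hp, phi_X_succ, MvPolynomial.map_X]

set_option maxHeartbeats 1000000 in
lemma phi_eval (z : Fin (n+1) → A) (F : MvPolynomial (Fin (n+1)) A) :
    eval (fun i : Fin n => Ideal.Quotient.mk (Ideal.span {z 0}) (z i.succ)) (phi (z 0) n F)
      = Ideal.Quotient.mk (Ideal.span {z 0}) (eval z F) := by
  induction F using MvPolynomial.induction_on with
  | C a => simp
  | add p q hp hq => simp only [map_add, hp, hq]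
  | mul_X p j hp =>
      induction j using Fin.cases with
      | zero =>
          have h0 : Ideal.Quotient.mk (Ideal.span {z 0}) (z 0) = 0 := by
            rw [Ideal.Quotient.eq_zero_iff_mem]
            exact Ideal.subset_span (Set.mem_singleton _)
          rw [map_mul, map_mul, hp, phi_X_zero, map_zero, mul_zero,
            map_mul, eval_X, map_mul, h0, mul_zero]
      | succ i =>
          rw [map_mul, map_mul, hp, phi_X_succ, eval_X,
            map_mul, eval_X, map_mul]

lemma phi_monomial_mapDomain (u : Fin n →₀ ℕ) (a : A) :
    phi z0 n (monomial (Finsupp.mapDomain Fin.succ u) a)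
      = monomial u (Ideal.Quotient.mk (Ideal.span {z0}) a) := by
  rw [← rename_monomial, phi_rename, map_monomial]

end Phi

/-- Decomposition `F = X 0 * P + rename Fin.succ Q`. -/
lemma decomp {N : ℕ} (e : ℕ) (F : MvPolynomial (Fin (N+1)) A)
    (hF : F.IsHomogeneous (e+1)) :
    ∃ (P : MvPolynomial (Fin (N+1)) A) (Q : MvPolynomial (Fin N) A),
      F = X 0 * P + rename Fin.succ Q ∧ P.IsHomogeneous e ∧ Q.IsHomogeneous (e+1) := by
  classical
  refine ⟨∑ m ∈ F.support.filter (fun m => m 0 ≠ 0),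
      monomial (m - Finsupp.single 0 1) (coeff m F),
    ∑ m ∈ F.support.filter (fun m => ¬ m 0 ≠ 0),
      monomial (Finsupp.comapDomain Fin.succ m (Fin.succ_injective _).injOn) (coeff m F),
    ?_, ?_, ?_⟩
  · rw [Finset.mul_sum, map_sum]
    have h1 : ∀ m ∈ F.support.filter (fun m => m 0 ≠ 0),
        X (0 : Fin (N+1)) * monomial (m - Finsupp.single 0 1) (coeff m F)
          = monomial m (coeff m F) := by
      intro m hm
      rw [Finset.mem_filter] at hm
      rw [← pow_one (X (0 : Fin (N+1))), ← monomial_single_add, single_add_sub hm.2]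
    have h2 : ∀ m ∈ F.support.filter (fun m => ¬ m 0 ≠ 0),
        (rename Fin.succ)
          (monomial (Finsupp.comapDomain Fin.succ m (Fin.succ_injective _).injOn) (coeff m F))
          = monomial m (coeff m F) := by
      intro m hm
      rw [Finset.mem_filter, not_not] at hm
      rw [rename_monomial, Finsupp.mapDomain_comapDomain _ (Fin.succ_injective _) _ ?_]
      intro j hj
      have hj0 : j ≠ 0 := by
        rintro rfl
        exact (Finsupp.mem_support_iff.mp hj) hm.2
      obtain ⟨i, rfl⟩ := Fin.exists_succ_eq_of_ne_zero hj0
      exact ⟨i, rfl⟩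
    rw [Finset.sum_congr rfl h1, Finset.sum_congr rfl h2,
      Finset.sum_filter_add_sum_filter_not F.support _ (fun m => monomial m (coeff m F)),
      support_sum_monomial_coeff]
  · apply IsHomogeneous.sum
    intro m hm
    rw [Finset.mem_filter] at hm
    apply isHomogeneous_monomial
    rw [degree_sub_single hm.2, degree_of_mem_support hF hm.1]
    omega
  · apply IsHomogeneous.sum
    intro m hm
    rw [Finset.mem_filter, not_not] at hm
    apply isHomogeneous_monomial
    have hmap : Finsupp.mapDomain Fin.succ
        (Finsupp.comapDomain Fin.succ m (Fin.succ_injective _).injOn) = m := by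
      apply Finsupp.mapDomain_comapDomain _ (Fin.succ_injective _)
      intro j hj
      have hj0 : j ≠ 0 := by
        rintro rfl
        exact (Finsupp.mem_support_iff.mp hj) hm.2
      obtain ⟨i, rfl⟩ := Fin.exists_succ_eq_of_ne_zero hj0
      exact ⟨i, rfl⟩
    have := degree_mapDomain
      (Finsupp.comapDomain Fin.succ m (Fin.succ_injective _).injOn)
    rw [hmap] at this
    rw [← this, degree_of_mem_support hF hm.1]

/-- Homogeneous lifting along `phi`. -/
lemma lift_homog {N : ℕ} (z0 : A) (e : ℕ)
    (Qb : MvPolynomial (Fin N) (A ⧸ Ideal.span {z0})) (hQ : Qb.IsHomogeneous e) :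
    ∃ G : MvPolynomial (Fin (N+1)) A, G.IsHomogeneous e ∧ phi z0 N G = Qb := by
  classical
  refine ⟨∑ u ∈ Qb.support, monomial (Finsupp.mapDomain Fin.succ u)
      (Function.surjInv Ideal.Quotient.mk_surjective (coeff u Qb)), ?_, ?_⟩
  · apply IsHomogeneous.sum
    intro u hu
    apply isHomogeneous_monomial
    rw [degree_mapDomain]
    exact degree_of_mem_support hQ hu
  · rw [map_sum]
    have h : ∀ u ∈ Qb.support,
        phi z0 N (monomial (Finsupp.mapDomain Fin.succ u)
          (Function.surjInv Ideal.Quotient.mk_surjective (coeff u Qb)))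
          = monomial u (coeff u Qb) := by
      intro u _
      rw [phi_monomial_mapDomain, Function.surjInv_eq Ideal.Quotient.mk_surjective]
    rw [Finset.sum_congr rfl h, support_sum_monomial_coeff]

/-- Homogeneous component of a product with a degree-one polynomial. -/
lemma homogComp_mul {N : ℕ} {L : MvPolynomial (Fin N) A} (hL : L.IsHomogeneous 1)
    (e : ℕ) (G : MvPolynomial (Fin N) A) :
    homogeneousComponent (e+1) (L * G) = L * homogeneousComponent e G := by
  classical
  conv_lhs => rw [← sum_homogeneousComponent G]
  rw [Finset.mul_sum, map_sum]
  have h : ∀ i ∈ Finset.range (G.totalDegree + 1),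
      homogeneousComponent (e+1) (L * homogeneousComponent i G)
        = if i = e then L * homogeneousComponent i G else 0 := by
    intro i _
    have hmem : L * homogeneousComponent i G ∈ homogeneousSubmodule (Fin N) A (1 + i) :=
      (mem_homogeneousSubmodule _ _).mpr
        (hL.mul (homogeneousComponent_isHomogeneous i G))
    rw [homogeneousComponent_of_mem hmem]
    congr 1
    simp only [eq_iff_iff]
    omega
  rw [Finset.sum_congr rfl h, Finset.sum_ite_eq' (Finset.range (G.totalDegree + 1)) e]
  split_ifs with he
  · rfl
  · rw [Finset.mem_range, not_lt] at he
    rw [homogeneousComponent_eq_zero _ _ (by omega), mul_zero]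

section Transfer

variable {n : ℕ} (z : Fin (n+1) → A)

lemma z_ne_zero (hmin : ∀ k : Fin (n+1), z k ∉ Ideal.span (z '' {j | j ≠ k}))
    (k : Fin (n+1)) : z k ≠ 0 := by
  intro h
  apply hmin k
  rw [h]
  exact zero_mem _

lemma span_z0_prime (hmin : ∀ k : Fin (n+1), z k ∉ Ideal.span (z '' {j | j ≠ k}))
    (hprime : ∀ i : ℕ, 1 ≤ i → i ≤ n+1 →
      (Ideal.span (z '' {j | j.val < i})).IsPrime ∨
      Ideal.span (z '' {j | j.val < i}) = ⊥) :
    (Ideal.span {z 0}).IsPrime := by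
  have hset : z '' {j : Fin (n+1) | j.val < 1} = {z 0} := by
    have h0 : {j : Fin (n+1) | j.val < 1} = {0} := by
      ext j
      simp only [Set.mem_setOf_eq, Set.mem_singleton_iff, Fin.ext_iff, Fin.val_zero]; omega
    rw [h0, Set.image_singleton]
  rcases hprime 1 le_rfl (by omega) with h | h
  · rwa [hset] at h
  · exfalso
    rw [hset] at h
    have h2 : z 0 ∈ (⊥ : Ideal A) := h ▸ Ideal.subset_span (Set.mem_singleton _)
    exact z_ne_zero z hmin 0 (by simpa using h2)

lemma hmin_bar (hmin : ∀ k : Fin (n+1), z k ∉ Ideal.span (z '' {j | j ≠ k})) (k : Fin n) :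
    ¬ ((fun i : Fin n => Ideal.Quotient.mk (Ideal.span {z 0}) (z i.succ)) k ∈
      Ideal.span ((fun i : Fin n => Ideal.Quotient.mk (Ideal.span {z 0}) (z i.succ)) ''
        {j | j ≠ k})) := by
  intro hk
  apply hmin k.succ
  have himg : (fun i : Fin n => Ideal.Quotient.mk (Ideal.span {z 0}) (z i.succ)) '' {j | j ≠ k}
      = (Ideal.Quotient.mk (Ideal.span {z 0})) '' (z '' (Fin.succ '' {j | j ≠ k})) := by
    rw [Set.image_image, Set.image_image]
  rw [himg, ← Ideal.map_span, Ideal.mem_quotient_iff_mem_sup] at hk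
  have hle : Ideal.span (z '' (Fin.succ '' {j | j ≠ k})) ⊔ Ideal.span {z 0}
      ≤ Ideal.span (z '' {j | j ≠ k.succ}) := by
    apply sup_le
    · apply Ideal.span_mono
      apply Set.image_mono
      rintro j ⟨j', hj', rfl⟩
      exact fun hc => hj' (Fin.succ_injective _ hc)
    · rw [Ideal.span_le, Set.singleton_subset_iff]
      exact Ideal.subset_span ⟨0, Ne.symm (Fin.succ_ne_zero k), rfl⟩
  exact hle hk

lemma hprime_bar (hmin : ∀ k : Fin (n+1), z k ∉ Ideal.span (z '' {j | j ≠ k}))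
    (hprime : ∀ i : ℕ, 1 ≤ i → i ≤ n+1 →
      (Ideal.span (z '' {j | j.val < i})).IsPrime ∨
      Ideal.span (z '' {j | j.val < i}) = ⊥)
    (i : ℕ) (h1 : 1 ≤ i) (h2 : i ≤ n) :
    (Ideal.span ((fun l : Fin n => Ideal.Quotient.mk (Ideal.span {z 0}) (z l.succ)) ''
      {j | j.val < i})).IsPrime ∨
    Ideal.span ((fun l : Fin n => Ideal.Quotient.mk (Ideal.span {z 0}) (z l.succ)) ''
      {j | j.val < i}) = ⊥ := by
  left
  have hz0mem : z 0 ∈ Ideal.span (z '' {j : Fin (n+1) | j.val < i+1}) :=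
    Ideal.subset_span ⟨0, by simp only [Set.mem_setOf_eq, Fin.val_zero]; omega, rfl⟩
  have hsets : {j : Fin (n+1) | j.val < i+1} = insert 0 (Fin.succ '' {j : Fin n | j.val < i}) := by
    ext j
    induction j using Fin.cases with
    | zero => simp
    | succ l =>
        simp only [Set.mem_setOf_eq, Fin.val_succ, Set.mem_insert_iff, Set.mem_image]
        constructor
        · intro h
          right
          exact ⟨l, by omega, rfl⟩
        · rintro (h | ⟨m, hm, hml⟩)
          · exact absurd h (Fin.succ_ne_zero l)
          · have : m = l := Fin.succ_injective _ hml
            omega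
  have heq : Ideal.span ((fun l : Fin n => Ideal.Quotient.mk (Ideal.span {z 0}) (z l.succ)) ''
        {j | j.val < i})
      = Ideal.map (Ideal.Quotient.mk (Ideal.span {z 0}))
          (Ideal.span (z '' {j : Fin (n+1) | j.val < i+1})) := by
    rw [Ideal.map_span, hsets, Set.image_insert_eq, Set.image_insert_eq]
    have hmk0 : Ideal.Quotient.mk (Ideal.span {z 0}) (z 0) = 0 := by
      rw [Ideal.Quotient.eq_zero_iff_mem]
      exact Ideal.subset_span (Set.mem_singleton _)
    rw [hmk0, Ideal.span_insert, Set.singleton_zero, Ideal.span_zero, bot_sup_eq,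
      Set.image_image, Set.image_image]
  rw [heq]
  have hbig : (Ideal.span (z '' {j : Fin (n+1) | j.val < i+1})).IsPrime := by
    rcases hprime (i+1) (by omega) (by omega) with h | h
    · exact h
    · exfalso
      have h3 : z 0 ∈ (⊥ : Ideal A) := h ▸ hz0mem
      exact z_ne_zero z hmin 0 (by simpa using h3)
  haveI := hbig
  apply Ideal.map_isPrime_of_surjective Ideal.Quotient.mk_surjective
  rw [Ideal.mk_ker, Ideal.span_le, Set.singleton_subset_iff]
  exact hz0mem

end Transfer

lemma lift_linear {n : ℕ} (z : Fin (n+1) → A)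
    (L : MvPolynomial (Fin n) (A ⧸ Ideal.span {z 0}))
    (hL : L ∈ relSet (fun i : Fin n => Ideal.Quotient.mk (Ideal.span {z 0}) (z i.succ))) :
    ∃ L' : MvPolynomial (Fin (n+1)) A, L' ∈ relSet z ∧ phi (z 0) n L' = L := by
  obtain ⟨ab, habL, hab0⟩ := hL
  have hmk : ∀ i, Ideal.Quotient.mk (Ideal.span {z 0})
      (Function.surjInv Ideal.Quotient.mk_surjective (ab i)) = ab i := fun i =>
    Function.surjInv_eq Ideal.Quotient.mk_surjective (ab i)
  have hsum : (∑ i, Function.surjInv Ideal.Quotient.mk_surjective (ab i) * z i.succ)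
      ∈ Ideal.span {z 0} := by
    rw [← Ideal.Quotient.eq_zero_iff_mem, map_sum, ← hab0]
    refine Finset.sum_congr rfl fun i _ => ?_
    rw [map_mul, hmk]
  obtain ⟨r, hr⟩ := Ideal.mem_span_singleton.mp hsum
  set a : Fin (n+1) → A := Fin.cons (-r)
      (fun i => Function.surjInv Ideal.Quotient.mk_surjective (ab i)) with ha
  refine ⟨∑ j, C (a j) * X j, ⟨a, rfl, ?_⟩, ?_⟩
  · rw [Fin.sum_univ_succ, ha]
    simp only [Fin.cons_zero, Fin.cons_succ]
    rw [hr]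
    ring
  · rw [map_sum, Fin.sum_univ_succ, habL, ha]
    simp only [map_mul, phi_C, phi_X_zero, phi_X_succ, Fin.cons_zero, Fin.cons_succ,
      mul_zero, zero_add]
    refine Finset.sum_congr rfl fun i _ => ?_
    rw [hmk]

theorem aux (n : ℕ) :
    ∀ (A : Type u) [CommRing A] [IsDomain A] (z : Fin n → A),
      (∀ k : Fin n, z k ∉ Ideal.span (z '' {j | j ≠ k})) →
      (∀ i : ℕ, 1 ≤ i → i ≤ n →
        (Ideal.span (z '' {j | j.val < i})).IsPrime ∨
        Ideal.span (z '' {j | j.val < i}) = ⊥) →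
      ∀ (d : ℕ) (F : MvPolynomial (Fin n) A), 0 < d → F.IsHomogeneous d →
        eval z F = 0 → F ∈ Ideal.span (relSet z) := by
  induction n with
  | zero =>
      intro A _ _ z hmin hprime d F hd hF hev
      have hF0 : F = 0 := by
        ext m
        rw [coeff_zero]
        by_contra hc
        have h1 : m.degree = d := degree_of_coeff_ne_zero hF hc
        have h2 : m = 0 := Finsupp.ext fun i => Fin.elim0 i
        rw [h2, map_zero] at h1
        omega
      rw [hF0]
      exact zero_mem _
  | succ n IH =>
      intro A _ _ z hmin hprime d
      induction d using Nat.strong_induction_on with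
      | _ d IHd =>
        intro F hd hF hev
        by_cases hd1 : d = 1
        · subst hd1
          have heq := homog_deg_one_eq hF
          have h3 := hev
          rw [heq, map_sum] at h3
          simp only [map_mul, eval_C, eval_X] at h3
          rw [heq]
          exact Ideal.subset_span ⟨fun i => coeff (Finsupp.single i 1) F, rfl, h3⟩
        · obtain ⟨e, rfl⟩ : ∃ e, d = e + 2 := ⟨d - 2, by omega⟩
          clear hd hd1
          have hz0 : z 0 ≠ 0 := z_ne_zero z hmin 0
          haveI hPrime : (Ideal.span {z 0}).IsPrime := span_z0_prime z hmin hprime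
          haveI : IsDomain (A ⧸ Ideal.span {z 0}) := Ideal.Quotient.isDomain _
          obtain ⟨P, Q, hFPQ, hPh, hQh⟩ := decomp (e+1) F hF
          have hphiF : phi (z 0) n F
              = MvPolynomial.map (Ideal.Quotient.mk (Ideal.span {z 0})) Q := by
            rw [hFPQ, map_add, map_mul, phi_X_zero, zero_mul, zero_add, phi_rename]
          have hphiFh : (phi (z 0) n F).IsHomogeneous (e+2) := by
            rw [hphiF]
            exact hQh.map _
          have hphiFev : eval (fun i : Fin n => Ideal.Quotient.mk (Ideal.span {z 0}) (z i.succ))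
              (phi (z 0) n F) = 0 := by
            rw [phi_eval n z F, hev, map_zero]
          have hmem : phi (z 0) n F ∈ Ideal.span
              (relSet (fun i : Fin n => Ideal.Quotient.mk (Ideal.span {z 0}) (z i.succ))) :=
            IH (A ⧸ Ideal.span {z 0})
              (fun i : Fin n => Ideal.Quotient.mk (Ideal.span {z 0}) (z i.succ))
              (fun k => hmin_bar z hmin k)
              (fun i h1 h2 => hprime_bar z hmin hprime i h1 h2)
              (e+2) _ (by omega) hphiFh hphiFev
          obtain ⟨c, hcsupp, hcsum⟩ := Submodule.mem_span_set.mp hmem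
          -- rewrite `phi F` as a combination with homogeneous coefficients
          have he2 : phi (z 0) n F
              = ∑ L ∈ c.support, L * homogeneousComponent (e+1) (c L) := by
            have h0 : homogeneousComponent (e+2) (phi (z 0) n F) = phi (z 0) n F := by
              rw [homogeneousComponent_of_mem ((mem_homogeneousSubmodule _ _).mpr hphiFh),
                if_pos rfl]
            conv_lhs => rw [← h0, ← hcsum]
            rw [Finsupp.sum, map_sum]
            refine Finset.sum_congr rfl fun L hL => ?_
            have hL1 : L.IsHomogeneous 1 := relSet_isHomogeneous (hcsupp hL)
            rw [smul_eq_mul, mul_comm]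
            exact homogComp_mul hL1 (e+1) (c L)
          have hLex : ∀ L : MvPolynomial (Fin n) (A ⧸ Ideal.span {z 0}),
              L ∈ relSet (fun i : Fin n => Ideal.Quotient.mk (Ideal.span {z 0}) (z i.succ)) →
              ∃ L' : MvPolynomial (Fin (n+1)) A, L' ∈ relSet z ∧ phi (z 0) n L' = L :=
            fun L hL => lift_linear z L hL
          choose Lf hLf1 hLf2 using hLex
          have hGex : ∀ L : MvPolynomial (Fin n) (A ⧸ Ideal.span {z 0}),
              ∃ G : MvPolynomial (Fin (n+1)) A, G.IsHomogeneous (e+1) ∧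
                phi (z 0) n G = homogeneousComponent (e+1) L :=
            fun L => lift_homog (z 0) (e+1) _ (homogeneousComponent_isHomogeneous _ _)
          choose Gf hGf1 hGf2 using hGex
          set F2 : MvPolynomial (Fin (n+1)) A :=
            F - ∑ L ∈ c.support.attach, Lf L.1 (hcsupp L.2) * Gf (c L.1) with hF2
          have hdiffmem : ∑ L ∈ c.support.attach, Lf L.1 (hcsupp L.2) * Gf (c L.1)
              ∈ Ideal.span (relSet z) :=
            Ideal.sum_mem _ fun L _ => Ideal.mul_mem_right _ _
              (Ideal.subset_span (hLf1 L.1 (hcsupp L.2)))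
          have hF2h : F2.IsHomogeneous (e+2) := by
            apply hF.sub
            apply IsHomogeneous.sum
            intro L _
            have h := (relSet_isHomogeneous (hLf1 L.1 (hcsupp L.2))).mul (hGf1 (c L.1))
            have h12 : 1 + (e+1) = e+2 := by omega
            rwa [h12] at h
          have hF2ev : eval z F2 = 0 := by
            rw [hF2, map_sub, hev, map_sum, zero_sub, neg_eq_zero]
            refine Finset.sum_eq_zero fun L _ => ?_
            rw [map_mul, eval_eq_zero_of_mem_span (Ideal.subset_span (hLf1 L.1 (hcsupp L.2))),
              zero_mul]
          have hphiF2 : phi (z 0) n F2 = 0 := by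
            rw [hF2, map_sub, map_sum, he2, sub_eq_zero,
              ← Finset.sum_attach c.support (fun L => L * homogeneousComponent (e+1) (c L))]
            refine Finset.sum_congr rfl fun L _ => ?_
            rw [map_mul, hLf2 L.1 (hcsupp L.2), hGf2]
          -- kernel step
          obtain ⟨P2, Q2, hF2PQ, hP2h, hQ2h⟩ := decomp (e+1) F2 hF2h
          have hmapQ2 : MvPolynomial.map (Ideal.Quotient.mk (Ideal.span {z 0})) Q2 = 0 := by
            have h5 : phi (z 0) n F2
                = MvPolynomial.map (Ideal.Quotient.mk (Ideal.span {z 0})) Q2 := by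
              rw [hF2PQ, map_add, map_mul, phi_X_zero, zero_mul, zero_add, phi_rename]
            rw [← h5, hphiF2]
          have hdvd : ∀ u : Fin n →₀ ℕ, ∃ v, coeff u Q2 = z 0 * v := by
            intro u
            have h0 : Ideal.Quotient.mk (Ideal.span {z 0}) (coeff u Q2) = 0 := by
              rw [← coeff_map, hmapQ2, coeff_zero]
            rw [Ideal.Quotient.eq_zero_iff_mem] at h0
            exact Ideal.mem_span_singleton.mp h0
          choose r hr using hdvd
          have hsupne : ∀ u ∈ Q2.support, u.support.Nonempty := by
            intro u hu
            rw [Finsupp.support_nonempty_iff]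
            intro h0
            have hdeg := degree_of_mem_support hQ2h hu
            rw [h0, map_zero] at hdeg
            omega
          set W : MvPolynomial (Fin (n+1)) A := P2 + ∑ u ∈ Q2.support.attach,
            C (z ((hsupne u.1 u.2).choose).succ) *
              monomial (Finsupp.mapDomain Fin.succ u.1 -
                Finsupp.single ((hsupne u.1 u.2).choose).succ 1) (r u.1) with hW
          have hne : ∀ u : {x // x ∈ Q2.support},
              (Finsupp.mapDomain Fin.succ u.1) (((hsupne u.1 u.2).choose).succ) ≠ 0 := by
            intro u
            rw [Finsupp.mapDomain_apply (Fin.succ_injective _)]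
            exact Finsupp.mem_support_iff.mp (hsupne u.1 u.2).choose_spec
          have hkey : F2 - X 0 * W = ∑ u ∈ Q2.support.attach,
              (C (z 0) * X ((hsupne u.1 u.2).choose).succ
                - C (z ((hsupne u.1 u.2).choose).succ) * X 0) *
              monomial (Finsupp.mapDomain Fin.succ u.1 -
                Finsupp.single ((hsupne u.1 u.2).choose).succ 1) (r u.1) := by
            have hQ2eq : rename Fin.succ Q2 = ∑ u ∈ Q2.support.attach,
                C (z 0) * (X ((hsupne u.1 u.2).choose).succ *
                  monomial (Finsupp.mapDomain Fin.succ u.1 -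
                    Finsupp.single ((hsupne u.1 u.2).choose).succ 1) (r u.1)) := by
              conv_lhs => rw [← support_sum_monomial_coeff Q2]
              rw [map_sum, ← Finset.sum_attach Q2.support
                (fun u => rename Fin.succ (monomial u (coeff u Q2)))]
              refine Finset.sum_congr rfl fun u _ => ?_
              rw [rename_monomial, hr u.1, X, monomial_mul, one_mul,
                single_add_sub (hne u), C_mul_monomial]
            rw [hF2PQ, hW, hQ2eq, mul_add, Finset.mul_sum, add_sub_add_left_eq_sub,
              ← Finset.sum_sub_distrib]
            refine Finset.sum_congr rfl fun u _ => ?_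
            ring
          have hkeymem : F2 - X 0 * W ∈ Ideal.span (relSet z) := by
            rw [hkey]
            exact Ideal.sum_mem _ fun u _ => Ideal.mul_mem_right _ _
              (Ideal.subset_span (koszul_mem z 0 _))
          have hWh : W.IsHomogeneous (e+1) := by
            apply hP2h.add
            apply IsHomogeneous.sum
            intro u _
            have hmono : ((Finsupp.mapDomain Fin.succ u.1 -
                Finsupp.single ((hsupne u.1 u.2).choose).succ 1)).degree = e+1 := by
              rw [degree_sub_single (hne u), degree_mapDomain,
                degree_of_mem_support hQ2h u.2]
              omega
            have h := (isHomogeneous_C (Fin (n+1))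
                (z ((hsupne u.1 u.2).choose).succ)).mul
              (isHomogeneous_monomial (r u.1) hmono)
            rwa [zero_add] at h
          have hevW : eval z W = 0 := by
            have h1 : eval z (F2 - X 0 * W) = 0 := eval_eq_zero_of_mem_span hkeymem
            rw [map_sub, hF2ev, zero_sub, neg_eq_zero, map_mul, eval_X] at h1
            rcases mul_eq_zero.mp h1 with h | h
            · exact absurd h hz0
            · exact h
          have hWmem : W ∈ Ideal.span (relSet z) :=
            IHd (e+1) (by omega) W (by omega) hWh hevW
          have hF2mem : F2 ∈ Ideal.span (relSet z) := by
            have h6 : F2 = X 0 * W + (F2 - X 0 * W) := by ring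
            rw [h6]
            exact Ideal.add_mem _ (Ideal.mul_mem_left _ _ hWmem) hkeymem
          have h7 : F = F2 + ∑ L ∈ c.support.attach, Lf L.1 (hcsupp L.2) * Gf (c L.1) := by
            rw [hF2]
            ring
          rw [h7]
          exact Ideal.add_mem _ hF2mem hdiffmem

end PSeqLinearType

/-- Let `A` be an integral domain and `z 0, …, z (n-1)` a `p`-sequence
such that each partial ideal `(z_1,…,z_i)` is prime (or zero). Then `I = (z_1,…,z_n)` is
of linear type: every (positive-degree homogeneous) polynomial relation on `z_1,…,z_n`
lies in the ideal generated by the linear relations. -/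
theorem pSequence_prime_linearType {A : Type*} [CommRing A] [IsDomain A] {n : ℕ}
    (z : Fin n → A)
    (hmin : ∀ k : Fin n, z k ∉ Ideal.span (z '' {j | j ≠ k}))
    (hcolon : ∀ i : ℕ, i < n → ∀ i1 i2 : Fin n, i ≤ i1.val → i1 ≤ i2 →
      (Ideal.span (z '' {j | j.val < i})).colon (Ideal.span {z i1 * z i2}) =
      (Ideal.span (z '' {j | j.val < i})).colon (Ideal.span {z i1}))
    (hprime : ∀ i : ℕ, 1 ≤ i → i ≤ n →
      (Ideal.span (z '' {j | j.val < i})).IsPrime ∨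
      Ideal.span (z '' {j | j.val < i}) = ⊥) :
    ∀ (F : MvPolynomial (Fin n) A) (d : ℕ), 0 < d → F.IsHomogeneous d →
      MvPolynomial.eval z F = 0 →
      F ∈ Ideal.span {L : MvPolynomial (Fin n) A |
        ∃ a : Fin n → A, L = ∑ i, C (a i) * X i ∧ ∑ i, a i * z i = 0} := by
  intro F d hd hF hev
  exact PSeqLinearType.aux n A z hmin hprime d F hd hF hev
end
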